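/- arXiv:1603.06527 — 3 statements merged into one kernel-verified Lean document; each statement's English description precedes it below -/
import Mathlib

section
/- For any nonnegative integer d, any prime power q (or more generally any element q of a commutative ring), and any indeterminate y, the identity y^d = \sum_{j=0}^{d} q^{j^2} \binom{d}{j}_q \prod_{i=j+1}^{d} (y - q^i) holds, where \binom{d}{j}_q denotes the Gaussian (q-)binomial coefficient. -/
open Finset

/-- The Gaussian binomial coefficient `[d choose j]_q`, defined via the q-Pascal recursion. -/
def qb {R : Type*} [CommRing R] (q : R) : ℕ → ℕ → R
  | _, 0 => 1
  | 0, _ + 1 => 0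
  | n + 1, k + 1 => qb q n k + q ^ (k + 1) * qb q n (k + 1)

lemma qb_eq_zero {R : Type*} [CommRing R] (q : R) : ∀ n k : ℕ, n < k → qb q n k = 0
  | 0, _ + 1, _ => rfl
  | n + 1, k + 1, h => by
    rw [qb, qb_eq_zero q n k (by omega), qb_eq_zero q n (k + 1) (by omega)]
    ring

lemma aux {R : Type*} [CommRing R] (q y : R) (d : ℕ) : ∀ n : ℕ,
    ∑ j ∈ range (d + 1), q ^ (j ^ 2 + n * j) * qb q d j *
      ∏ i ∈ Icc (j + 1) d, (y - q ^ (i + n)) = y ^ d := by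
  induction d with
  | zero => intro n; simp [qb]
  | succ d ih =>
    intro n
    rw [sum_range_succ']
    have h0 : qb q (d + 1) 0 = (1 : R) := rfl
    simp only [qb, h0]
    have step : ∀ j ∈ range (d + 1),
        q ^ ((j + 1) ^ 2 + n * (j + 1)) * (qb q d j + q ^ (j + 1) * qb q d (j + 1)) *
          ∏ i ∈ Icc (j + 1 + 1) (d + 1), (y - q ^ (i + n))
        = y * (q ^ (j ^ 2 + (n + 1) * j) * qb q d j *
              ∏ i ∈ Icc (j + 1) d, (y - q ^ (i + (n + 1))))
          + (q ^ ((j + 1) ^ 2 + (j + 1) + n * (j + 1)) * qb q d (j + 1) *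
              ∏ i ∈ Icc (j + 1 + 1) (d + 1), (y - q ^ (i + n))
            - q ^ (j ^ 2 + j + n * j) * qb q d j *
              ∏ i ∈ Icc (j + 1) (d + 1), (y - q ^ (i + n))) := by
      intro j hj
      have hre : ∏ i ∈ Icc (j + 1 + 1) (d + 1), (y - q ^ (i + n))
          = ∏ i ∈ Icc (j + 1) d, (y - q ^ (i + (n + 1))) := by
        rw [← Finset.map_add_right_Icc (j + 1) d 1, Finset.prod_map]
        refine prod_congr rfl fun x _ => ?_
        simp only [addRightEmbedding_apply]
        ring_nf
      have hpeel : ∏ i ∈ Icc (j + 1) (d + 1), (y - q ^ (i + n))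
          = (y - q ^ (j + 1 + n)) * ∏ i ∈ Icc (j + 1 + 1) (d + 1), (y - q ^ (i + n)) := by
        have hjd := mem_range.mp hj
        rw [← Finset.insert_Icc_add_one_left_eq_Icc (by omega), prod_insert (by simp)]
      rw [hpeel, hre]
      ring
    rw [sum_congr rfl step, sum_add_distrib]
    have tele : ∑ j ∈ range (d + 1),
        (q ^ ((j + 1) ^ 2 + (j + 1) + n * (j + 1)) * qb q d (j + 1) *
            ∏ i ∈ Icc (j + 1 + 1) (d + 1), (y - q ^ (i + n))
          - q ^ (j ^ 2 + j + n * j) * qb q d j *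
            ∏ i ∈ Icc (j + 1) (d + 1), (y - q ^ (i + n)))
        = q ^ ((d + 1) ^ 2 + (d + 1) + n * (d + 1)) * qb q d (d + 1) *
            ∏ i ∈ Icc (d + 1 + 1) (d + 1), (y - q ^ (i + n))
          - q ^ (0 ^ 2 + 0 + n * 0) * qb q d 0 *
            ∏ i ∈ Icc (0 + 1) (d + 1), (y - q ^ (i + n)) :=
      Finset.sum_range_sub (fun j => q ^ (j ^ 2 + j + n * j) * qb q d j *
        ∏ i ∈ Icc (j + 1) (d + 1), (y - q ^ (i + n))) (d + 1)
    rw [tele, qb_eq_zero q d (d + 1) (by omega)]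
    have hqb0 : qb q d 0 = (1 : R) := by cases d <;> rfl
    simp only [hqb0]
    rw [← mul_sum, ih (n + 1)]
    ring

theorem stmt0 {R : Type*} [CommRing R] (q y : R) (d : ℕ) :
    y ^ d = ∑ j ∈ range (d + 1), q ^ (j ^ 2) * qb q d j * ∏ i ∈ Icc (j + 1) d, (y - q ^ i) := by
  have := aux q y d 0
  simp only [Nat.zero_mul, Nat.add_zero] at this
  exact this.symm
end

section
/- Let F be a finite field with q elements and n a positive integer. The number of nilpotent matrices in M_n(F) is q^{n(n-1)} = q^{n^2 - n}. -/
open Finset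

/-- `|GL_m(F_q)|` as a product. -/
def Gn (q m : ℕ) : ℕ := ∏ i : Fin m, (q ^ m - q ^ (i : ℕ))

lemma castG {q : ℕ} (hq : 2 ≤ q) (m : ℕ) :
    (Gn q m : ℚ) = ∏ i : Fin m, ((q : ℚ) ^ m - (q : ℚ) ^ (i : ℕ)) := by
  rw [Gn, Nat.cast_prod]
  refine Finset.prod_congr rfl fun i _ => ?_
  rw [Nat.cast_sub (Nat.pow_le_pow_right (by omega) i.2.le)]
  push_cast; ring

lemma G_pos_q {q : ℕ} (hq : 2 ≤ q) (m : ℕ) : (0 : ℚ) < (Gn q m : ℚ) := by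
  rw [castG hq]
  apply Finset.prod_pos
  intro i _
  have h1 : (q : ℚ) ^ (i : ℕ) < (q : ℚ) ^ m := by
    apply pow_lt_pow_right₀ (by exact_mod_cast by omega) i.2
  linarith

lemma G_ne {q : ℕ} (hq : 2 ≤ q) (m : ℕ) : (Gn q m : ℚ) ≠ 0 :=
  ne_of_gt (G_pos_q hq m)

lemma G_succ {q : ℕ} (hq : 2 ≤ q) (m : ℕ) :
    (Gn q (m + 1) : ℚ) = (q : ℚ) ^ m * ((q : ℚ) ^ (m + 1) - 1) * (Gn q m : ℚ) := by
  rw [castG hq, castG hq, Fin.prod_univ_succ]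
  simp only [Fin.val_zero, pow_zero, Fin.val_succ]
  have h : ∀ i : Fin m, (q : ℚ) ^ (m + 1) - (q : ℚ) ^ ((i : ℕ) + 1)
      = (q : ℚ) * ((q : ℚ) ^ m - (q : ℚ) ^ (i : ℕ)) := fun i => by ring
  rw [Finset.prod_congr rfl fun i _ => h i, Finset.prod_mul_distrib, Finset.prod_const,
    Finset.card_univ, Fintype.card_fin]
  ring

lemma sum_identity {q : ℕ} (hq : 2 ≤ q) (m : ℕ) :
    (Gn q m : ℚ) * ∑ k ∈ range (m + 1), (q : ℚ) ^ (k * (k - 1)) / (Gn q k : ℚ) =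
      (q : ℚ) ^ (m * m) := by
  induction m with
  | zero => simp [Gn]
  | succ m ih =>
    have hne : (Gn q (m + 1) : ℚ) ≠ 0 := G_ne hq _
    have h2 : (Gn q (m+1) : ℚ) * ((q:ℚ) ^ ((m+1)*(m+1-1)) / (Gn q (m+1) : ℚ))
        = (q:ℚ) ^ ((m+1)*(m+1-1)) := by field_simp
    rw [Finset.sum_range_succ, mul_add, h2,
      G_succ hq, mul_assoc, ih, Nat.add_sub_cancel,
      show (m+1)*m = m*m + m from by ring, show (m+1)*(m+1) = m*m + m + (m+1) from by ring,
      pow_add, pow_add, pow_add]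
    ring

open Module LinearMap Submodule

section LinAlg
set_option linter.unusedSectionVars false
variable {F : Type*} [Field F] {V : Type*} [AddCommGroup V] [Module F V]
  [FiniteDimensional F V]

local notation "dd" => Module.finrank F V

/-- Assemble an endomorphism from endomorphisms of two complementary submodules. -/
noncomputable def bld {U W : Submodule F V} (hc : IsCompl U W)
    (g : Module.End F U) (h : Module.End F W) : Module.End F V :=
  LinearMap.ofIsCompl hc (U.subtype ∘ₗ g) (W.subtype ∘ₗ h)

lemma bld_left {U W : Submodule F V} (hc : IsCompl U W) (g : Module.End F U)
    (h : Module.End F W) (u : U) : bld hc g h u = (g u : V) :=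
  LinearMap.ofIsCompl_left_apply hc u

lemma bld_right {U W : Submodule F V} (hc : IsCompl U W) (g : Module.End F U)
    (h : Module.End F W) (w : W) : bld hc g h w = (h w : V) :=
  LinearMap.ofIsCompl_right_apply hc w

lemma bld_mul {U W : Submodule F V} (hc : IsCompl U W) (g g' : Module.End F U)
    (h h' : Module.End F W) : bld hc g h * bld hc g' h' = bld hc (g * g') (h * h') := by
  conv_rhs => rw [bld]
  refine (LinearMap.ofIsCompl_eq hc ?_ ?_).symm
  · intro u
    simp only [coe_comp, Function.comp_apply, Submodule.coe_subtype, Module.End.mul_apply]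
    rw [bld_left, bld_left]
  · intro w
    simp only [coe_comp, Function.comp_apply, Submodule.coe_subtype, Module.End.mul_apply]
    rw [bld_right, bld_right]

lemma bld_one {U W : Submodule F V} (hc : IsCompl U W) :
    bld hc (1 : Module.End F U) (1 : Module.End F W) = 1 := by
  conv_lhs => rw [bld]
  exact LinearMap.ofIsCompl_eq hc (fun u => by simp) (fun w => by simp)

lemma bld_pow {U W : Submodule F V} (hc : IsCompl U W) (g : Module.End F U)
    (h : Module.End F W) (m : ℕ) : (bld hc g h) ^ m = bld hc (g ^ m) (h ^ m) := by
  induction m with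
  | zero => simpa using (bld_one hc).symm
  | succ m ih => rw [pow_succ, pow_succ, pow_succ, ih, bld_mul]

lemma bld_apply {U W : Submodule F V} (hc : IsCompl U W) (g : Module.End F U)
    (h : Module.End F W) (x : V) :
    bld hc g h x = (g (U.projectionOnto W hc x) : V)
      + (h (W.projectionOnto U hc.symm x) : V) := by
  conv_lhs => rw [← (show (U.projectionOnto W hc x : V) + (W.projectionOnto U hc.symm x : V) = x from
    Submodule.projection_add_projection_eq_self hc x)]
  rw [map_add, bld_left, bld_right]

lemma ker_bld {U W : Submodule F V} (hc : IsCompl U W) {g : Module.End F U}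
    {h : Module.End F W} (hg : g = 0) (hh : Function.Injective h) :
    LinearMap.ker (bld hc g h) = U := by
  ext x
  rw [LinearMap.mem_ker, bld_apply, hg]
  simp only [LinearMap.zero_apply, ZeroMemClass.coe_zero, zero_add]
  constructor
  · intro hx
    have h0 : h (W.projectionOnto U hc.symm x) = 0 := by
      exact_mod_cast Subtype.ext hx
    have := hh (h0.trans (map_zero h).symm)
    rwa [Submodule.projectionOnto_apply_eq_zero_iff] at this
  · intro hx
    rw [(Submodule.projectionOnto_apply_eq_zero_iff hc.symm).2 hx, map_zero,
      ZeroMemClass.coe_zero]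

lemma range_bld {U W : Submodule F V} (hc : IsCompl U W) {g : Module.End F U}
    {h : Module.End F W} (hg : g = 0) (hh : Function.Surjective h) :
    LinearMap.range (bld hc g h) = W := by
  apply le_antisymm
  · rintro _ ⟨x, rfl⟩
    rw [bld_apply, hg]
    simp
  · intro w hw
    obtain ⟨w', hw'⟩ := hh ⟨w, hw⟩
    refine ⟨(w' : V), ?_⟩
    rw [bld_right, hw']

lemma range_stab (f : Module.End F V) {m : ℕ} (hm : dd ≤ m) :
    LinearMap.range (f ^ m) = LinearMap.range (f ^ dd) := by
  apply Submodule.eq_of_le_of_finrank_le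
  · rw [show m = dd + (m - dd) by omega, pow_add]
    exact LinearMap.range_comp_le_range _ _
  · have h1 := LinearMap.finrank_range_add_finrank_ker (f ^ m)
    have h2 := LinearMap.finrank_range_add_finrank_ker (f ^ dd)
    rw [Module.End.ker_pow_eq_ker_pow_finrank_of_le hm] at h1
    omega

lemma fitting_compl (f : Module.End F V) :
    IsCompl (LinearMap.ker (f ^ dd)) (LinearMap.range (f ^ dd)) := by
  obtain ⟨N, hN⟩ := Filter.eventually_atTop.mp f.eventually_isCompl_ker_pow_range_pow
  have h := hN (max N dd) (le_max_left _ _)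
  rwa [Module.End.ker_pow_eq_ker_pow_finrank_of_le (le_max_right _ _),
    range_stab f (le_max_right _ _)] at h

lemma mapsTo_ker (f : Module.End F V) :
    ∀ x ∈ LinearMap.ker (f ^ dd), f x ∈ LinearMap.ker (f ^ dd) := by
  intro x hx
  have h : LinearMap.ker (f ^ (dd + 1)) = LinearMap.ker (f ^ dd) :=
    Module.End.ker_pow_eq_ker_pow_finrank_of_le (by omega)
  rw [← h] at hx
  rw [LinearMap.mem_ker] at hx ⊢
  calc (f ^ dd) (f x) = (f ^ dd * f) x := rfl
  _ = (f ^ (dd + 1)) x := by rw [pow_succ]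
  _ = 0 := hx

lemma mapsTo_range (f : Module.End F V) :
    ∀ x ∈ LinearMap.range (f ^ dd), f x ∈ LinearMap.range (f ^ dd) := by
  rintro _ ⟨y, rfl⟩
  have h : LinearMap.range (f ^ (dd + 1)) = LinearMap.range (f ^ dd) :=
    range_stab f (by omega)
  rw [← h]
  exact ⟨y, by rw [pow_succ']; rfl⟩

/-- Nilpotency index is at most the dimension. -/
lemma pow_dim_eq_zero {g : Module.End F V} (hg : IsNilpotent g) : g ^ dd = 0 := by
  obtain ⟨k, hk⟩ := hg
  rcases le_or_gt k dd with h | h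
  · exact pow_eq_zero_of_le h hk
  · have h1 : LinearMap.ker (g ^ k) = LinearMap.ker (g ^ dd) :=
      Module.End.ker_pow_eq_ker_pow_finrank_of_le h.le
    rw [hk, LinearMap.ker_zero] at h1
    exact LinearMap.ker_eq_top.mp h1.symm

variable (F V) in
/-- The fiber of the Fitting-decomposition map. -/
abbrev fib (U W : Submodule F V) : Type _ :=
  {f : Module.End F V // LinearMap.ker (f ^ dd) = U ∧ LinearMap.range (f ^ dd) = W}

lemma fib_isEmpty {U W : Submodule F V} (h : ¬ IsCompl U W) : IsEmpty (fib F V U W) :=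
  ⟨fun ⟨f, h1, h2⟩ => h (h1 ▸ h2 ▸ fitting_compl f)⟩

lemma pow_eq_zero_of_dim_le {g : Module.End F V} (hg : IsNilpotent g) {m : ℕ}
    (hm : dd ≤ m) : g ^ m = 0 :=
  pow_eq_zero_of_le hm (pow_dim_eq_zero hg)

section fib
variable {U W : Submodule F V}

lemma restrict_nil {f : Module.End F V} (h1 : LinearMap.ker (f ^ dd) = U)
    (hU : ∀ x ∈ U, f x ∈ U) : IsNilpotent (f.restrict hU) := by
  refine ⟨dd, ?_⟩
  rw [Module.End.pow_restrict]
  ext x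
  rw [LinearMap.restrict_coe_apply]
  have hx : (x : V) ∈ LinearMap.ker (f ^ dd) := by rw [h1]; exact x.2
  simpa using hx

lemma mapsTo_of_ker_eq {f : Module.End F V} (h1 : LinearMap.ker (f ^ dd) = U) :
    ∀ x ∈ U, f x ∈ U := by
  intro x hx
  rw [← h1] at hx ⊢
  exact mapsTo_ker f x hx

lemma mapsTo_of_range_eq {f : Module.End F V} (h2 : LinearMap.range (f ^ dd) = W) :
    ∀ x ∈ W, f x ∈ W := by
  intro x hx
  rw [← h2] at hx ⊢
  exact mapsTo_range f x hx

lemma restrict_isUnit {f : Module.End F V} (hc : IsCompl U W)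
    (h1 : LinearMap.ker (f ^ dd) = U)
    (hW : ∀ x ∈ W, f x ∈ W) : IsUnit (f.restrict hW) := by
  rw [LinearMap.isUnit_iff_ker_eq_bot]
  apply LinearMap.ker_eq_bot'.mpr
  intro x hx0
  have hfx : f (x : V) = 0 := by
    have := congrArg (Subtype.val) hx0
    rwa [LinearMap.restrict_coe_apply] at this
  rcases Nat.eq_zero_or_pos dd with h0 | hpos
  · haveI : Subsingleton V := by
      have := Module.finrank_zero_iff (R := F) (M := V)
      exact this.mp h0
    exact Subtype.ext (Subsingleton.elim _ _)
  · have hxk : (x : V) ∈ LinearMap.ker (f ^ dd) := by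
      rw [LinearMap.mem_ker, show dd = (dd - 1) + 1 by omega, pow_succ,
        Module.End.mul_apply, hfx, map_zero]
    have hmem : (x : V) ∈ U ⊓ W := ⟨h1 ▸ hxk, x.2⟩
    rw [hc.disjoint.eq_bot, Submodule.mem_bot] at hmem
    exact Subtype.ext hmem

noncomputable def fibTo (hc : IsCompl U W) (f : fib F V U W) :
    {g : Module.End F U // IsNilpotent g} × (Module.End F W)ˣ :=
  (⟨f.1.restrict (mapsTo_of_ker_eq f.2.1), restrict_nil f.2.1 _⟩,
    (restrict_isUnit hc f.2.1 (mapsTo_of_range_eq f.2.2)).unit)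

noncomputable def fibInv (hc : IsCompl U W)
    (p : {g : Module.End F U // IsNilpotent g} × (Module.End F W)ˣ) : fib F V U W := by
  refine ⟨bld hc p.1.1 p.2.1, ?_, ?_⟩
  · rw [bld_pow]
    refine ker_bld hc (pow_eq_zero_of_dim_le p.1.2 (Submodule.finrank_le U)) ?_
    have hu : IsUnit ((p.2 : Module.End F W) ^ dd) := by
      rw [← Units.val_pow_eq_pow_val]; exact (p.2 ^ dd).isUnit
    exact LinearMap.ker_eq_bot.mp ((LinearMap.isUnit_iff_ker_eq_bot _).mp hu)
  · rw [bld_pow]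
    refine range_bld hc (pow_eq_zero_of_dim_le p.1.2 (Submodule.finrank_le U)) ?_
    have hu : IsUnit ((p.2 : Module.End F W) ^ dd) := by
      rw [← Units.val_pow_eq_pow_val]; exact (p.2 ^ dd).isUnit
    exact LinearMap.range_eq_top.mp ((LinearMap.isUnit_iff_range_eq_top _).mp hu)

noncomputable def fibEquiv (hc : IsCompl U W) :
    fib F V U W ≃ {g : Module.End F U // IsNilpotent g} × (Module.End F W)ˣ where
  toFun := fibTo hc
  invFun := fibInv hc
  left_inv := by
    rintro ⟨f, h1, h2⟩
    apply Subtype.ext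
    simp only [fibInv, fibTo, IsUnit.unit_spec]
    conv_lhs => rw [bld]
    exact LinearMap.ofIsCompl_eq hc
      (fun u => by simp [LinearMap.restrict_coe_apply])
      (fun w => by simp [LinearMap.restrict_coe_apply])
  right_inv := by
    rintro ⟨g, h⟩
    refine Prod.ext ?_ ?_
    · apply Subtype.ext
      simp only [fibTo]
      refine LinearMap.ext fun u => Subtype.ext ?_
      rw [LinearMap.restrict_coe_apply]
      exact bld_left hc g.1 h.1 u
    · apply Units.ext
      simp only [fibTo, IsUnit.unit_spec]
      refine LinearMap.ext fun w => Subtype.ext ?_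
      rw [LinearMap.restrict_coe_apply]
      exact bld_right hc g.1 h.1 w

end fib

end LinAlg

section Counting
variable {F : Type*} [Field F]

/-- Transport nilpotent endomorphisms along a linear equivalence. -/
def nilEquiv {V₁ V₂ : Type*} [AddCommGroup V₁] [Module F V₁] [AddCommGroup V₂] [Module F V₂]
    (e : V₁ ≃ₗ[F] V₂) :
    {g : Module.End F V₁ // IsNilpotent g} ≃ {g : Module.End F V₂ // IsNilpotent g} where
  toFun g := ⟨e.conjAlgEquiv F g.1, g.2.map (e.conjAlgEquiv F)⟩
  invFun g := ⟨(e.conjAlgEquiv F).symm g.1, g.2.map (e.conjAlgEquiv F).symm⟩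
  left_inv g := by simp
  right_inv g := by simp

variable (F) in
/-- Number of nilpotent endomorphisms of `F^m`. -/
noncomputable def NC (m : ℕ) : ℕ :=
  Nat.card {g : Module.End F (Fin m → F) // IsNilpotent g}

lemma card_nil_eq (V : Type*) [AddCommGroup V] [Module F V] [FiniteDimensional F V] :
    Nat.card {g : Module.End F V // IsNilpotent g} = NC F (Module.finrank F V) :=
  Nat.card_congr (nilEquiv (Module.finBasis F V).equivFun)

lemma card_units_end [Fintype F] (W : Type*) [AddCommGroup W] [Module F W]
    [FiniteDimensional F W] :
    Nat.card (Module.End F W)ˣ = Gn (Fintype.card F) (Module.finrank F W) := by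
  have e1 : (Module.End F W)ˣ ≃
      (Matrix (Fin (Module.finrank F W)) (Fin (Module.finrank F W)) F)ˣ :=
    (Units.mapEquiv (algEquivMatrix (Module.finBasis F W)).toRingEquiv.toMulEquiv).toEquiv
  rw [Nat.card_congr e1]
  have : Nat.card (GL (Fin (Module.finrank F W)) F)
      = ∏ i : Fin (Module.finrank F W), (Fintype.card F ^ (Module.finrank F W)
        - Fintype.card F ^ (i : ℕ)) := Matrix.card_GL_field _
  exact this

end Counting

section Master
variable {F : Type*} [Field F] [Fintype F] {V : Type*} [AddCommGroup V] [Module F V]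
  [Finite V]

local instance : Finite (Module.End F V) :=
  Finite.of_injective (fun f => (f : V → V)) DFunLike.coe_injective

variable (F V) in
/-- Number of complementary pairs with first component of dimension `k`. -/
noncomputable def Pc (k : ℕ) : ℕ :=
  Nat.card {p : Submodule F V × Submodule F V //
    IsCompl p.1 p.2 ∧ Module.finrank F p.1 = k}

open Module in
lemma master_count :
    Nat.card (Module.End F V) = ∑ k ∈ Finset.range (finrank F V + 1),
      Pc F V k * (NC F k * Gn (Fintype.card F) (finrank F V - k)) := by
  classical
  haveI : Fintype (Submodule F V × Submodule F V) := Fintype.ofFinite _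
  haveI : Fintype (Module.End F V) := Fintype.ofFinite _
  set dd := finrank F V with hdd
  set φ : Module.End F V → Submodule F V × Submodule F V :=
    fun f => (LinearMap.ker (f ^ dd), LinearMap.range (f ^ dd)) with hφ
  have h0 : Nat.card (Module.End F V)
      = ∑ p : Submodule F V × Submodule F V, Nat.card {f : Module.End F V // φ f = p} := by
    rw [← Nat.card_congr (Equiv.sigmaFiberEquiv φ), Nat.card_eq_fintype_card,
      Fintype.card_sigma]
    simp [Nat.card_eq_fintype_card]
  rw [h0]
  -- identify fiber cardinalities
  have hfib : ∀ p : Submodule F V × Submodule F V,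
      Nat.card {f : Module.End F V // φ f = p}
        = if IsCompl p.1 p.2 then NC F (finrank F p.1) * Gn (Fintype.card F) (dd - finrank F p.1)
          else 0 := by
    intro p
    have e1 : {f : Module.End F V // φ f = p} ≃ fib F V p.1 p.2 :=
      Equiv.subtypeEquivRight (fun f => by rw [hφ, Prod.ext_iff])
    rw [Nat.card_congr e1]
    by_cases hc : IsCompl p.1 p.2
    · rw [if_pos hc, Nat.card_congr (fibEquiv hc), Nat.card_prod, card_nil_eq,
        card_units_end]
      congr 2
      have := Submodule.finrank_add_eq_of_isCompl hc
      omega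
    · rw [if_neg hc]
      haveI := fib_isEmpty (F := F) (V := V) hc
      exact Nat.card_of_isEmpty
  rw [Finset.sum_congr rfl (fun p _ => hfib p)]
  have hsplit : ∀ p : Submodule F V × Submodule F V,
      (if IsCompl p.1 p.2 then NC F (finrank F p.1) * Gn (Fintype.card F) (dd - finrank F p.1)
        else 0)
      = ∑ k ∈ Finset.range (dd + 1),
          (if IsCompl p.1 p.2 ∧ finrank F p.1 = k
            then NC F k * Gn (Fintype.card F) (dd - k) else 0) := by
    intro p
    by_cases hc : IsCompl p.1 p.2
    · rw [if_pos hc, Finset.sum_eq_single (finrank F p.1)]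
      · rw [if_pos ⟨hc, rfl⟩]
      · intro k _ hne
        apply if_neg
        rintro ⟨-, h2⟩
        exact hne h2.symm
      · intro hb
        exact absurd (Finset.mem_range.mpr
          (by have h := Submodule.finrank_le p.1; omega)) hb
    · rw [if_neg hc, eq_comm]
      exact Finset.sum_eq_zero fun k _ => if_neg (fun h => hc h.1)
  rw [Finset.sum_congr rfl (fun p _ => hsplit p), Finset.sum_comm]
  refine Finset.sum_congr rfl fun k _ => ?_
  rw [← Finset.sum_filter, Finset.sum_const, smul_eq_mul]
  congr 1
  rw [Pc, Nat.card_eq_fintype_card, Fintype.card_subtype]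

end Master

section Frames
variable {F : Type*} [Field F] {V : Type*} [AddCommGroup V] [Module F V]
  [FiniteDimensional F V] {k m n : ℕ}

open Module Submodule

variable (F) in
/-- Map a tuple to the pair of spans of its two halves. -/
noncomputable def psiMap (e : Fin k ⊕ Fin m ≃ Fin n) (s : Fin n → V) :
    Submodule F V × Submodule F V :=
  (Submodule.span F (Set.range fun i : Fin k => s (e (Sum.inl i))),
   Submodule.span F (Set.range fun j : Fin m => s (e (Sum.inr j))))

lemma li_comp_e (e : Fin k ⊕ Fin m ≃ Fin n) {s : Fin n → V} (hs : LinearIndependent F s) :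
    LinearIndependent F (fun x : Fin k ⊕ Fin m => s (e x)) :=
  (linearIndependent_equiv e).mpr hs

lemma li_elim (e : Fin k ⊕ Fin m ≃ Fin n) {s : Fin n → V} (hs : LinearIndependent F s) :
    LinearIndependent F
      (Sum.elim (fun i : Fin k => s (e (Sum.inl i))) (fun j : Fin m => s (e (Sum.inr j)))) := by
  have h := li_comp_e e hs
  convert h using 1
  funext x; cases x <;> rfl

lemma span_eq_of_rank {U : Submodule F V} (hU : Module.finrank F U = k)
    {t : Fin k → U} (ht : LinearIndependent F t) :
    Submodule.span F (Set.range fun i => (t i : V)) = U := by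
  apply Submodule.eq_of_le_of_finrank_le
  · rw [Submodule.span_le]; rintro _ ⟨i, rfl⟩; exact (t i).2
  · have hli : LinearIndependent F (fun i => (t i : V)) :=
      ht.map' U.subtype (Submodule.ker_subtype U)
    rw [finrank_span_eq_card hli, Fintype.card_fin, hU]

lemma psi_isCompl (e : Fin k ⊕ Fin m ≃ Fin n) {s : Fin n → V} (hs : LinearIndependent F s)
    (hn : Module.finrank F V = n) :
    IsCompl (psiMap F e s).1 (psiMap F e s).2 := by
  have hsum := linearIndependent_sum.mp (li_elim e hs)
  constructor
  · exact hsum.2.2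
  · rw [codisjoint_iff]
    have h1 : (psiMap F e s).1 ⊔ (psiMap F e s).2
        = Submodule.span F (Set.range (Sum.elim (fun i : Fin k => s (e (Sum.inl i)))
            (fun j : Fin m => s (e (Sum.inr j))))) := by
      rw [Set.Sum.elim_range, Submodule.span_union]; rfl
    have h2 : Set.range (Sum.elim (fun i : Fin k => s (e (Sum.inl i)))
        (fun j : Fin m => s (e (Sum.inr j)))) = Set.range s := by
      have : Sum.elim (fun i : Fin k => s (e (Sum.inl i)))
          (fun j : Fin m => s (e (Sum.inr j))) = s ∘ (fun x => e x) := by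
        funext x; cases x <;> rfl
      rw [this, Set.range_comp, Set.range_eq_univ.mpr e.surjective, Set.image_univ]
    rw [h1, h2]
    apply Submodule.eq_top_of_finrank_eq
    rw [finrank_span_eq_card hs, Fintype.card_fin, hn]

lemma psi_rank1 (e : Fin k ⊕ Fin m ≃ Fin n) {s : Fin n → V} (hs : LinearIndependent F s) :
    Module.finrank F (psiMap F e s).1 = k := by
  have hsum := linearIndependent_sum.mp (li_elim e hs)
  have : Module.finrank F (psiMap F e s).1
      = Fintype.card (Fin k) := finrank_span_eq_card hsum.1
  simpa using this

noncomputable def framesEquiv (e : Fin k ⊕ Fin m ≃ Fin n) {U W : Submodule F V}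
    (hc : IsCompl U W) (hU : Module.finrank F U = k) (hW : Module.finrank F W = m) :
    {s : {s : Fin n → V // LinearIndependent F s} // psiMap F e s.1 = (U, W)}
      ≃ {t : Fin k → U // LinearIndependent F t} × {u : Fin m → W // LinearIndependent F u} where
  toFun s :=
    have h1 : Submodule.span F (Set.range fun i : Fin k => s.1.1 (e (Sum.inl i))) = U :=
      congrArg Prod.fst s.2
    have h2 : Submodule.span F (Set.range fun j : Fin m => s.1.1 (e (Sum.inr j))) = W :=
      congrArg Prod.snd s.2
    (⟨fun i => ⟨s.1.1 (e (Sum.inl i)), h1.le (Submodule.subset_span (Set.mem_range_self i))⟩,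
        LinearIndependent.of_comp U.subtype ((li_comp_e e s.1.2).comp Sum.inl Sum.inl_injective)⟩,
     ⟨fun j => ⟨s.1.1 (e (Sum.inr j)), h2.le (Submodule.subset_span (Set.mem_range_self j))⟩,
        LinearIndependent.of_comp W.subtype ((li_comp_e e s.1.2).comp Sum.inr Sum.inr_injective)⟩)
  invFun tu :=
    have hfun : (fun x : Fin k ⊕ Fin m => (Sum.elim (fun i => ((tu.1.1 i : V)))
        (fun j => ((tu.2.1 j : V))) (e.symm (e x)))) = Sum.elim (fun i => ((tu.1.1 i : V)))
        (fun j => ((tu.2.1 j : V))) := by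
      funext x; rw [e.symm_apply_apply]
    have hli : LinearIndependent F (fun j : Fin n => Sum.elim (fun i => ((tu.1.1 i : V)))
        (fun j => ((tu.2.1 j : V))) (e.symm j)) := by
      apply (linearIndependent_equiv e).mp
      show LinearIndependent F (fun x => Sum.elim _ _ (e.symm (e x)))
      rw [hfun]
      refine linearIndependent_sum.mpr
        ⟨tu.1.2.map' U.subtype (Submodule.ker_subtype U),
         tu.2.2.map' W.subtype (Submodule.ker_subtype W), ?_⟩
      refine hc.disjoint.mono ?_ ?_ <;>
        · rw [Submodule.span_le]; rintro _ ⟨i, rfl⟩; exact Subtype.coe_prop _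
    ⟨⟨fun j => Sum.elim (fun i => ((tu.1.1 i : V))) (fun j => ((tu.2.1 j : V))) (e.symm j), hli⟩,
      by
        have hl : (fun i : Fin k => Sum.elim (fun i => ((tu.1.1 i : V)))
            (fun j => ((tu.2.1 j : V))) (e.symm (e (Sum.inl i)))) = fun i => (tu.1.1 i : V) := by
          funext i; rw [e.symm_apply_apply]; rfl
        have hr : (fun j : Fin m => Sum.elim (fun i => ((tu.1.1 i : V)))
            (fun j => ((tu.2.1 j : V))) (e.symm (e (Sum.inr j)))) = fun j => (tu.2.1 j : V) := by
          funext j; rw [e.symm_apply_apply]; rfl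
        refine Prod.ext ?_ ?_
        · show Submodule.span F (Set.range _) = U
          rw [hl]
          exact span_eq_of_rank hU tu.1.2
        · show Submodule.span F (Set.range _) = W
          rw [hr]
          exact span_eq_of_rank hW tu.2.2⟩
  left_inv s := by
    apply Subtype.ext
    apply Subtype.ext
    funext j
    show Sum.elim _ _ (e.symm j) = s.1.1 j
    obtain ⟨x, rfl⟩ := e.surjective j
    rw [e.symm_apply_apply]
    cases x <;> rfl
  right_inv tu := by
    refine Prod.ext ?_ ?_
    · apply Subtype.ext
      funext i
      apply Subtype.ext
      show Sum.elim _ _ (e.symm (e (Sum.inl i))) = (tu.1.1 i : V)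
      rw [e.symm_apply_apply]
      rfl
    · apply Subtype.ext
      funext j
      apply Subtype.ext
      show Sum.elim _ _ (e.symm (e (Sum.inr j))) = (tu.2.1 j : V)
      rw [e.symm_apply_apply]
      rfl

end Frames

section Master2
variable {F : Type*} [Field F] [Fintype F] {V : Type*} [AddCommGroup V] [Module F V]
  [Finite V]

open Module

lemma frames_count {k : ℕ} (hk : k ≤ finrank F V) :
    Pc F V k * (Gn (Fintype.card F) k * Gn (Fintype.card F) (finrank F V - k))
      = Gn (Fintype.card F) (finrank F V) := by
  classical
  haveI : Fintype (Submodule F V × Submodule F V) := Fintype.ofFinite _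
  set qn := Fintype.card F with hqn
  set dd := finrank F V with hdd
  set m := dd - k with hm
  set e : Fin k ⊕ Fin m ≃ Fin dd := finSumFinEquiv.trans (finCongr (by omega)) with he
  have htot : Nat.card {s : Fin dd → V // LinearIndependent F s} = Gn qn dd := by
    rw [card_linearIndependent (le_refl dd)]
    rfl
  haveI : Fintype {s : Fin dd → V // LinearIndependent F s} := Fintype.ofFinite _
  set ψ : {s : Fin dd → V // LinearIndependent F s} → Submodule F V × Submodule F V :=
    fun s => psiMap F e s.1 with hψ
  have h0 : Nat.card {s : Fin dd → V // LinearIndependent F s}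
      = ∑ p : Submodule F V × Submodule F V, Nat.card {s // ψ s = p} := by
    rw [← Nat.card_congr (Equiv.sigmaFiberEquiv ψ), Nat.card_eq_fintype_card,
      Fintype.card_sigma]
    simp [Nat.card_eq_fintype_card]
  have hfib : ∀ p : Submodule F V × Submodule F V,
      Nat.card {s // ψ s = p}
        = if IsCompl p.1 p.2 ∧ finrank F p.1 = k then Gn qn k * Gn qn m else 0 := by
    intro p
    by_cases hcc : IsCompl p.1 p.2 ∧ finrank F p.1 = k
    · obtain ⟨hc, hU⟩ := hcc
      have hW : finrank F p.2 = m := by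
        have := Submodule.finrank_add_eq_of_isCompl hc
        omega
      rw [if_pos ⟨hc, hU⟩, Nat.card_congr (framesEquiv e hc hU hW), Nat.card_prod,
        card_linearIndependent (le_of_eq hU.symm), card_linearIndependent (le_of_eq hW.symm),
        hU, hW]
      rfl
    · rw [if_neg hcc]
      haveI : IsEmpty {s // ψ s = p} := by
        refine ⟨fun s => hcc ?_⟩
        rw [← s.2]
        exact ⟨psi_isCompl e s.1.2 rfl, psi_rank1 e s.1.2⟩
      exact Nat.card_of_isEmpty
  rw [← htot, h0, Finset.sum_congr rfl (fun p _ => hfib p), ← Finset.sum_filter,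
    Finset.sum_const, smul_eq_mul]
  congr 1
  rw [Pc, Nat.card_eq_fintype_card, Fintype.card_subtype]

end Master2

section Final
variable {F : Type*} [Field F] [Fintype F]

/-- Transport nilpotents along a ring equivalence. -/
def nilRingEquiv {A B : Type*} [Ring A] [Ring B] (e : A ≃+* B) :
    {a : A // IsNilpotent a} ≃ {b : B // IsNilpotent b} where
  toFun a := ⟨e a.1, a.2.map e⟩
  invFun b := ⟨e.symm b.1, b.2.map e.symm⟩
  left_inv a := by simp
  right_inv b := by simp

lemma card_end_eq (m : ℕ) :
    Nat.card (Module.End F (Fin m → F)) = Fintype.card F ^ (m * m) := by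
  classical
  rw [Nat.card_congr (algEquivMatrix' (R := F) (n := Fin m)).toEquiv,
    Nat.card_eq_fintype_card]
  show Fintype.card (Fin m → Fin m → F) = _
  rw [Fintype.card_fun, Fintype.card_fun, Fintype.card_fin, ← pow_mul]

lemma Gn_pos_nat {q : ℕ} (hq : 2 ≤ q) (m : ℕ) : 0 < Gn q m := by
  have := G_pos_q hq m
  exact_mod_cast this

lemma Gn_zero (q : ℕ) : Gn q 0 = 1 := by simp [Gn]

lemma finrank_fin_fun_self (m : ℕ) : Module.finrank F (Fin m → F) = m :=
  Module.finrank_fin_fun F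

lemma NC_eq : ∀ m : ℕ, NC F m = Fintype.card F ^ (m * (m - 1)) := by
  intro m
  induction m using Nat.strong_induction_on with
  | _ m ih =>
  set q := Fintype.card F with hq
  have hq2 : 2 ≤ q := Fintype.one_lt_card
  -- the master count over `Fin m → F`
  have hA := master_count (F := F) (V := Fin m → F)
  rw [card_end_eq, finrank_fin_fun_self] at hA
  -- `Pc` at the top degree is `1`
  have hPm : Pc F (Fin m → F) m = 1 := by
    have hB := frames_count (F := F) (V := Fin m → F) (k := m)
      (by rw [finrank_fin_fun_self])
    rw [finrank_fin_fun_self, Nat.sub_self, Gn_zero, mul_one] at hB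
    have hGpos := Gn_pos_nat hq2 m
    apply Nat.eq_of_mul_eq_mul_right hGpos
    rw [one_mul]
    exact hB
  -- the `q`-identity, specialized through `frames_count`
  have hBsum : ∑ k ∈ Finset.range (m + 1),
      Pc F (Fin m → F) k * (q ^ (k * (k - 1)) * Gn q (m - k)) = q ^ (m * m) := by
    have hcast : ∀ k, k ≤ m → (Pc F (Fin m → F) k : ℚ)
        = (Gn q m : ℚ) / ((Gn q k : ℚ) * (Gn q (m - k) : ℚ)) := by
      intro k hk
      have hB := frames_count (F := F) (V := Fin m → F) (k := k)
        (by rw [finrank_fin_fun_self]; exact hk)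
      rw [finrank_fin_fun_self] at hB
      have hcc : (Pc F (Fin m → F) k : ℚ) * ((Gn q k : ℚ) * (Gn q (m - k) : ℚ))
          = (Gn q m : ℚ) := by
        exact_mod_cast congrArg (Nat.cast (R := ℚ)) hB
      rw [eq_div_iff (mul_ne_zero (G_ne hq2 k) (G_ne hq2 (m - k)))]
      exact hcc
    have h1 : (∑ k ∈ Finset.range (m + 1),
        Pc F (Fin m → F) k * (q ^ (k * (k - 1)) * Gn q (m - k)) : ℚ) = (q : ℚ) ^ (m * m) := by
      push_cast
      rw [Finset.sum_congr rfl (fun k hk => ?_), ← Finset.mul_sum, sum_identity hq2 m]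
      rw [hcast k (by rw [Finset.mem_range] at hk; omega)]
      have hGk := G_ne hq2 k
      have hGmk := G_ne hq2 (m - k)
      field_simp
    exact_mod_cast h1
  -- substitute the induction hypothesis for `k < m`
  have hsub : ∀ k ∈ Finset.range m, Pc F (Fin m → F) k * (NC F k * Gn q (m - k))
      = Pc F (Fin m → F) k * (q ^ (k * (k - 1)) * Gn q (m - k)) := by
    intro k hk
    rw [Finset.mem_range] at hk
    rw [ih k hk]
  rw [Finset.sum_range_succ, Finset.sum_congr rfl hsub, hPm, Nat.sub_self, Gn_zero, mul_one,
    one_mul] at hA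
  rw [Finset.sum_range_succ, hPm, Nat.sub_self, Gn_zero, mul_one, one_mul] at hBsum
  rw [← hBsum] at hA
  exact (Nat.add_left_cancel hA).symm

end Final

theorem stmt5 (F : Type*) [Field F] [Fintype F] (q n : ℕ) (hq : Fintype.card F = q)
    (hn : 0 < n) :
    Nat.card {A : Matrix (Fin n) (Fin n) F // IsNilpotent A} = q ^ (n * (n - 1)) := by
  classical
  rw [Nat.card_congr (nilRingEquiv (algEquivMatrix' (R := F) (n := Fin n)).toRingEquiv).symm]
  have : Nat.card {g : Module.End F (Fin n → F) // IsNilpotent g} = NC F n := rfl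
  rw [this, NC_eq, hq]
end

section
/- Let V be an n-dimensional vector space over F_q, W a k-dimensional subspace, and U a fixed d-dimensional subspace of W. The number of linear transformations T : W \to V whose maximal T-invariant subspace contained in W equals U is q^{d^2} \prod_{i=d+1}^{k} (q^n - q^i). -/
open Finset Module

/-- The maximal `T`-invariant subspace contained in `W`, for a linear map `T : W → V`
defined on the subspace `W` of `V`: the sum of all subspaces `U ⊆ W` with `T(U) ⊆ U`. -/
def invSub {F V : Type*} [Field F] [AddCommGroup V] [Module F V] (W : Submodule F V)
    (T : W →ₗ[F] V) : Submodule F V :=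
  sSup {U : Submodule F V | U ≤ W ∧ ∀ x : W, (x : V) ∈ U → T x ∈ U}

section InvSubBasics

variable {F V : Type*} [Field F] [AddCommGroup V] [Module F V] (W : Submodule F V) (T : W →ₗ[F] V)

/-- `U` is a `T`-invariant subspace contained in `W`. -/
def IsInv (U : Submodule F V) : Prop := U ≤ W ∧ ∀ x : W, (x : V) ∈ U → T x ∈ U

lemma invSub_def : invSub W T = sSup {U : Submodule F V | IsInv W T U} := rfl

lemma isInv_bot : IsInv W T ⊥ := ⟨bot_le, fun x hx => by
  have : (x : V) = 0 := hx
  have hx0 : x = 0 := Subtype.ext this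
  simp [hx0]⟩

lemma isInv_sup {U₁ U₂ : Submodule F V} (h₁ : IsInv W T U₁) (h₂ : IsInv W T U₂) :
    IsInv W T (U₁ ⊔ U₂) := by
  refine ⟨sup_le h₁.1 h₂.1, fun x hx => ?_⟩
  rcases Submodule.mem_sup.1 hx with ⟨y, hy, z, hz, hyz⟩
  have hyW : y ∈ W := h₁.1 hy
  have hzW : z ∈ W := h₂.1 hz
  have hx' : x = (⟨y, hyW⟩ : W) + ⟨z, hzW⟩ := by
    apply Subtype.ext
    simp [hyz]
  rw [hx', map_add]
  exact Submodule.mem_sup.2 ⟨_, h₁.2 ⟨y, hyW⟩ hy, _, h₂.2 ⟨z, hzW⟩ hz, rfl⟩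

lemma invSub_isInv : IsInv W T (invSub W T) := by
  constructor
  · exact sSup_le (fun U hU => hU.1)
  · intro x hx
    have hdir : DirectedOn (· ≤ ·) {U : Submodule F V | IsInv W T U} :=
      fun U₁ h₁ U₂ h₂ => ⟨U₁ ⊔ U₂, isInv_sup W T h₁ h₂, le_sup_left, le_sup_right⟩
    have hne : ({U : Submodule F V | IsInv W T U}).Nonempty := ⟨⊥, isInv_bot W T⟩
    rcases (Submodule.mem_sSup_of_directed hne hdir).1 hx with ⟨U', hU', hxU'⟩
    exact le_sSup hU' (hU'.2 x hxU')

lemma le_invSub {U : Submodule F V} (h : IsInv W T U) : U ≤ invSub W T := le_sSup h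

lemma invSub_eq_iff {U : Submodule F V} :
    invSub W T = U ↔ IsInv W T U ∧ ∀ U', IsInv W T U' → U' ≤ U := by
  constructor
  · rintro rfl
    exact ⟨invSub_isInv W T, fun U' h => le_invSub W T h⟩
  · rintro ⟨h1, h2⟩
    exact le_antisymm (sSup_le fun U' h => h2 U' h) (le_invSub W T h1)

end InvSubBasics

section Counting

lemma card_preimage_addHom {G H : Type*} [AddCommGroup G] [AddCommGroup H] (φ : G →+ H)
    (hφ : Function.Surjective φ) (A : Set H) :
    Nat.card {g : G // φ g ∈ A} = Nat.card A * Nat.card {g : G // φ g = 0} := by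
  have hsec : ∀ h, φ (Function.surjInv hφ h) = h := Function.surjInv_eq hφ
  set s := Function.surjInv hφ with hs
  have e : {g : G // φ g ∈ A} ≃ A × {g : G // φ g = 0} :=
    { toFun := fun g => (⟨φ g.1, g.2⟩, ⟨g.1 - s (φ g.1), by simp [map_sub, hsec]⟩)
      invFun := fun p => ⟨s p.1.1 + p.2.1, by
        simp only [map_add, hsec, p.2.2, add_zero]
        exact p.1.2⟩
      left_inv := fun g => by simp
      right_inv := fun p => by
        have h1 : φ (s p.1.1 + p.2.1) = p.1.1 := by
          simp only [map_add, hsec, p.2.2, add_zero]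
        ext
        · simp [h1]
        · simp [h1] }
  rw [Nat.card_congr e, Nat.card_prod]

lemma card_linearMap' (F A B : Type*) [Field F] [Fintype F] [AddCommGroup A] [Module F A]
    [FiniteDimensional F A] [AddCommGroup B] [Module F B] [FiniteDimensional F B] :
    Nat.card (A →ₗ[F] B) = Fintype.card F ^ (finrank F A * finrank F B) := by
  have : Finite (A →ₗ[F] B) := Module.finite_of_finite F
  letI : Fintype (A →ₗ[F] B) := Fintype.ofFinite _
  rw [Nat.card_eq_fintype_card, card_eq_pow_finrank (K := F), finrank_linearMap]

end Counting

section Reduction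

variable {F V : Type*} [Field F] [AddCommGroup V] [Module F V] (W U : Submodule F V)

/-- Linear maps `W →ₗ V` leaving `U` invariant, as a submodule of the Hom space. -/
def invM : Submodule F (W →ₗ[F] V) where
  carrier := {T | ∀ x : W, (x : V) ∈ U → T x ∈ U}
  add_mem' := fun hT hS x hx => Submodule.add_mem U (hT x hx) (hS x hx)
  zero_mem' := fun x _ => by simp
  smul_mem' := fun c T hT x hx => Submodule.smul_mem U c (hT x hx)

lemma mem_invM {T : W →ₗ[F] V} : T ∈ invM W U ↔ ∀ x : W, (x : V) ∈ U → T x ∈ U := Iff.rfl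

/-- The map sending `T` (leaving `U` invariant) to its restriction to `U` and the
induced map on quotients. -/
noncomputable def Phi : (invM W U) →+
    ((U.comap W.subtype →ₗ[F] U) × ((W ⧸ U.comap W.subtype) →ₗ[F] (V ⧸ U))) where
  toFun T :=
    (LinearMap.codRestrict U (T.1 ∘ₗ (U.comap W.subtype).subtype) (fun x => T.2 x.1 x.2),
     (U.comap W.subtype).liftQ (U.mkQ ∘ₗ T.1) (by
        intro x hx
        simp only [LinearMap.mem_ker, LinearMap.comp_apply, Submodule.mkQ_apply,
          Submodule.Quotient.mk_eq_zero]
        exact T.2 x hx))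
  map_zero' := by
    refine Prod.ext ?_ ?_
    · ext x; simp
    · apply Submodule.linearMap_qext
      ext x; simp
  map_add' := fun T S => by
    refine Prod.ext ?_ ?_
    · ext x; simp; rfl
    · apply Submodule.linearMap_qext
      ext x; simp

lemma Phi_fst_apply (T : invM W U) (x : U.comap W.subtype) :
    (((Phi W U) T).1 x : V) = T.1 x.1 := rfl

lemma Phi_snd_mk (T : invM W U) (x : W) :
    ((Phi W U) T).2 (Submodule.Quotient.mk x) = U.mkQ (T.1 x) := by
  simp [Phi, Submodule.liftQ_apply]

lemma Phi_surjective : Function.Surjective (Phi W U) := by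
  rintro ⟨S, h⟩
  obtain ⟨c, hc⟩ := Submodule.exists_isCompl (U.comap W.subtype)
  set π := (U.comap W.subtype).linearProjOfIsCompl c hc with hπ
  obtain ⟨σ, hσ⟩ := LinearMap.exists_rightInverse_of_surjective U.mkQ (Submodule.range_mkQ U)
  have hσ' : ∀ y, U.mkQ (σ y) = y := fun y => by
    have := congrArg (fun f => f y) hσ
    simpa using this
  set T : W →ₗ[F] V := U.subtype ∘ₗ S ∘ₗ π + σ ∘ₗ h ∘ₗ (U.comap W.subtype).mkQ with hT
  have hTmem : T ∈ invM W U := by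
    intro x hx
    have hx0 : x ∈ U.comap W.subtype := hx
    have hmk : (U.comap W.subtype).mkQ x = 0 := by
      simp [Submodule.Quotient.mk_eq_zero, hx0]
    simp only [hT, LinearMap.add_apply, LinearMap.comp_apply, hmk, map_zero]
    simpa using (S (π x)).2
  refine ⟨⟨T, hTmem⟩, ?_⟩
  refine Prod.ext ?_ ?_
  · ext x
    have hmk : (U.comap W.subtype).mkQ x.1 = 0 := by
      rw [Submodule.mkQ_apply, Submodule.Quotient.mk_eq_zero]
      exact x.2
    have hπx : π x.1 = x := Submodule.linearProjOfIsCompl_apply_left hc x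
    show (T x.1 : V) = (S x : V)
    simp only [hT, LinearMap.add_apply, LinearMap.comp_apply, hmk, map_zero, add_zero, hπx]
    rfl
  · apply Submodule.linearMap_qext
    ext x
    have h1 : U.mkQ (U.subtype (S (π x))) = 0 := by
      simp [Submodule.Quotient.mk_eq_zero]
    simp only [LinearMap.comp_apply, Submodule.mkQ_apply]
    calc ((Phi W U) ⟨T, hTmem⟩).2 (Submodule.Quotient.mk x) = U.mkQ (T x) :=
          Phi_snd_mk W U ⟨T, hTmem⟩ x
    _ = U.mkQ (U.subtype (S (π x))) + U.mkQ (σ (h ((U.comap W.subtype).mkQ x))) := by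
          simp [hT]
    _ = h (Submodule.Quotient.mk x) := by
          rw [h1, hσ', zero_add, Submodule.mkQ_apply]

/-- The kernel of `Phi` is equivalent to `Hom(W/U₀, U)`. -/
noncomputable def kerPhiEquiv :
    {T : invM W U // (Phi W U) T = 0} ≃ ((W ⧸ U.comap W.subtype) →ₗ[F] U) where
  toFun T := (U.comap W.subtype).liftQ
      (LinearMap.codRestrict U T.1.1 (fun x => by
        have h2 : ((Phi W U) T.1).2 = 0 := by rw [T.2]; rfl
        have h4 : U.mkQ (T.1.1 x) = 0 := by
          have := congrArg (fun f => f (Submodule.Quotient.mk x)) h2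
          simpa only [Phi_snd_mk, LinearMap.zero_apply] using this
        rwa [Submodule.mkQ_apply, Submodule.Quotient.mk_eq_zero] at h4))
      (by
        intro x hx
        have h1 : ((Phi W U) T.1).1 = 0 := by rw [T.2]; rfl
        have h2 : ((Phi W U) T.1).1 ⟨x, hx⟩ = 0 := by rw [h1]; rfl
        have h3 : T.1.1 x = 0 := by
          have := congrArg (Subtype.val) h2
          simpa [Phi_fst_apply] using this
        simp only [LinearMap.mem_ker]
        apply Subtype.ext
        simpa using h3)
  invFun g := ⟨⟨U.subtype ∘ₗ g ∘ₗ (U.comap W.subtype).mkQ,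
      fun x _ => by simp only [LinearMap.comp_apply]; exact (g _).2⟩, by
    refine Prod.ext ?_ ?_
    · ext x
      have hmk : (U.comap W.subtype).mkQ x.1 = 0 := by
        rw [Submodule.mkQ_apply, Submodule.Quotient.mk_eq_zero]; exact x.2
      simp [Phi_fst_apply, hmk]
    · apply Submodule.linearMap_qext
      ext x
      simp only [LinearMap.comp_apply, Submodule.mkQ_apply, LinearMap.zero_apply]
      calc ((Phi W U) _).2 (Submodule.Quotient.mk x)
          = U.mkQ (U.subtype (g ((U.comap W.subtype).mkQ x))) := Phi_snd_mk W U _ x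
        _ = 0 := by simp [Submodule.Quotient.mk_eq_zero]⟩
  left_inv := fun T => by
    apply Subtype.ext
    apply Subtype.ext
    ext x
    simp
  right_inv := fun g => by
    apply Submodule.linearMap_qext
    ext x
    simp

end Reduction

section Transfer

variable {F V : Type*} [Field F] [AddCommGroup V] [Module F V] (W U : Submodule F V)

/-- The canonical equivalence `W / (U ∩ W) ≃ₗ (W + U)/U` (here with `U ≤ W`). -/
noncomputable def eWQ : (W ⧸ U.comap W.subtype) ≃ₗ[F] (W.map U.mkQ) :=
  (Submodule.quotEquivOfEq _ _ (by
      rw [LinearMap.ker_comp, Submodule.ker_mkQ])) ≪≫ₗ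
    (U.mkQ ∘ₗ W.subtype).quotKerEquivRange ≪≫ₗ
    (LinearEquiv.ofEq _ _ (by rw [LinearMap.range_comp, Submodule.range_subtype]))

lemma eWQ_mk (x : W) : ((eWQ W U) (Submodule.Quotient.mk x) : V ⧸ U) = U.mkQ x := rfl

/-- The induced map on quotients, with domain the subspace `W.map U.mkQ`. -/
noncomputable def Tbar (T : invM W U) : (W.map U.mkQ) →ₗ[F] (V ⧸ U) :=
  ((Phi W U) T).2 ∘ₗ ((eWQ W U).symm : (W.map U.mkQ) →ₗ[F] (W ⧸ U.comap W.subtype))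

lemma Tbar_apply (T : invM W U) (x : W) :
    Tbar W U T ⟨U.mkQ x, Submodule.mem_map_of_mem x.2⟩ = U.mkQ (T.1 x) := by
  have h : (⟨U.mkQ x, Submodule.mem_map_of_mem x.2⟩ : W.map U.mkQ)
      = (eWQ W U) (Submodule.Quotient.mk x) := Subtype.ext (by rw [eWQ_mk])
  rw [Tbar, LinearMap.comp_apply, h]
  simp only [LinearEquiv.coe_coe, LinearEquiv.symm_apply_apply]
  exact Phi_snd_mk W U T x

lemma invSub_transfer (hUW : U ≤ W) (T : invM W U) :
    invSub W T.1 = U ↔ invSub (W.map U.mkQ) (Tbar W U T) = ⊥ := by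
  constructor
  · intro h
    rw [invSub_eq_iff]
    refine ⟨isInv_bot _ _, ?_⟩
    intro Ub hUb
    set U₂ := (Ub.comap U.mkQ) ⊓ W with hU₂def
    have hU₂ : IsInv W T.1 U₂ := by
      refine ⟨inf_le_right, ?_⟩
      intro x hx
      have hx1 : U.mkQ x ∈ Ub := (Submodule.mem_inf.1 hx).1
      have hTy : Tbar W U T ⟨U.mkQ x, Submodule.mem_map_of_mem x.2⟩ ∈ Ub :=
        hUb.2 ⟨U.mkQ x, Submodule.mem_map_of_mem x.2⟩ hx1
      rw [Tbar_apply] at hTy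
      have hTW : T.1 x ∈ W := by
        have h2 : U.mkQ (T.1 x) ∈ W.map U.mkQ := hUb.1 hTy
        rcases h2 with ⟨w, hw, hweq⟩
        have hsub : T.1 x - w ∈ U := by
          rw [← Submodule.Quotient.eq]
          exact hweq.symm
        have : T.1 x = (T.1 x - w) + w := by abel
        rw [this]
        exact Submodule.add_mem W (hUW hsub) hw
      exact Submodule.mem_inf.2 ⟨hTy, hTW⟩
    have hle : U₂ ≤ U := h ▸ le_invSub W T.1 hU₂
    intro z hz
    rcases hUb.1 hz with ⟨w, hw, rfl⟩
    have hwU₂ : w ∈ U₂ := Submodule.mem_inf.2 ⟨hz, hw⟩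
    have : U.mkQ w = 0 := by
      rw [Submodule.mkQ_apply, Submodule.Quotient.mk_eq_zero]
      exact hle hwU₂
    rw [Submodule.mkQ_apply] at this
    simp [this]
  · intro hb
    rw [invSub_eq_iff]
    refine ⟨⟨hUW, T.2⟩, ?_⟩
    intro U' hU'
    have hUb' : IsInv (W.map U.mkQ) (Tbar W U T) (U'.map U.mkQ) := by
      refine ⟨Submodule.map_mono hU'.1, ?_⟩
      intro y hy
      rcases hy with ⟨x', hx', hx'eq⟩
      have hx'W : x' ∈ W := hU'.1 hx'
      have hyeq : y = ⟨U.mkQ x', Submodule.mem_map_of_mem hx'W⟩ := Subtype.ext (by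
        rw [← hx'eq])
      rw [hyeq, Tbar_apply W U T ⟨x', hx'W⟩]
      exact Submodule.mem_map_of_mem (hU'.2 ⟨x', hx'W⟩ hx')
    have hle : U'.map U.mkQ ≤ ⊥ := hb ▸ le_invSub _ _ hUb'
    intro x hx
    have : U.mkQ x ∈ (⊥ : Submodule F (V ⧸ U)) := hle (Submodule.mem_map_of_mem hx)
    rw [Submodule.mem_bot] at this
    rw [Submodule.mkQ_apply, Submodule.Quotient.mk_eq_zero] at this
    exact this

end Transfer

section CardR

variable {F V : Type*} [Field F] [AddCommGroup V] [Module F V]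

lemma cardR (W U : Submodule F V) (hUW : U ≤ W) :
    Nat.card {T : W →ₗ[F] V // invSub W T = U} =
      Nat.card ((U.comap W.subtype) →ₗ[F] U) *
        Nat.card {T' : (W.map U.mkQ) →ₗ[F] (V ⧸ U) // invSub (W.map U.mkQ) T' = ⊥} *
        Nat.card ((W ⧸ U.comap W.subtype) →ₗ[F] U) := by
  classical
  have e₁ : {T : W →ₗ[F] V // invSub W T = U} ≃ {T : invM W U // invSub W T.1 = U} :=
    { toFun := fun T => ⟨⟨T.1, fun x hx => ((invSub_eq_iff W T.1).1 T.2).1.2 x hx⟩, T.2⟩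
      invFun := fun T => ⟨T.1.1, T.2⟩
      left_inv := fun T => rfl
      right_inv := fun T => rfl }
  set A : Set (((U.comap W.subtype) →ₗ[F] U) × ((W ⧸ U.comap W.subtype) →ₗ[F] (V ⧸ U))) :=
    {p | invSub (W.map U.mkQ)
      (p.2 ∘ₗ ((eWQ W U).symm : (W.map U.mkQ) →ₗ[F] (W ⧸ U.comap W.subtype))) = ⊥} with hA
  have e₂ : {T : invM W U // invSub W T.1 = U} ≃ {T : invM W U // (Phi W U) T ∈ A} :=
    Equiv.subtypeEquivRight (fun T => by
      rw [invSub_transfer W U hUW T]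
      exact Iff.rfl)
  have hcard := card_preimage_addHom (Phi W U) (Phi_surjective W U) A
  have e₃ : A ≃ (((U.comap W.subtype) →ₗ[F] U) ×
      {h : (W ⧸ U.comap W.subtype) →ₗ[F] (V ⧸ U) // invSub (W.map U.mkQ)
        (h ∘ₗ ((eWQ W U).symm : (W.map U.mkQ) →ₗ[F] (W ⧸ U.comap W.subtype))) = ⊥}) :=
    { toFun := fun p => (p.1.1, ⟨p.1.2, p.2⟩)
      invFun := fun q => ⟨(q.1, q.2.1), q.2.2⟩
      left_inv := fun p => rfl
      right_inv := fun q => rfl }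
  have e₄ : {h : (W ⧸ U.comap W.subtype) →ₗ[F] (V ⧸ U) // invSub (W.map U.mkQ)
        (h ∘ₗ ((eWQ W U).symm : (W.map U.mkQ) →ₗ[F] (W ⧸ U.comap W.subtype))) = ⊥}
      ≃ {T' : (W.map U.mkQ) →ₗ[F] (V ⧸ U) // invSub (W.map U.mkQ) T' = ⊥} :=
    { toFun := fun h => ⟨h.1 ∘ₗ ((eWQ W U).symm :
          (W.map U.mkQ) →ₗ[F] (W ⧸ U.comap W.subtype)), h.2⟩
      invFun := fun T' => ⟨T'.1 ∘ₗ ((eWQ W U) :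
          (W ⧸ U.comap W.subtype) →ₗ[F] (W.map U.mkQ)), by
        have heq : (T'.1 ∘ₗ ((eWQ W U) : (W ⧸ U.comap W.subtype) →ₗ[F] (W.map U.mkQ))) ∘ₗ
            ((eWQ W U).symm : (W.map U.mkQ) →ₗ[F] (W ⧸ U.comap W.subtype)) = T'.1 := by
          ext y; simp
        rw [heq]
        exact T'.2⟩
      left_inv := fun h => Subtype.ext (by
        ext y; simp)
      right_inv := fun T' => Subtype.ext (by
        ext y; simp) }
  calc Nat.card {T : W →ₗ[F] V // invSub W T = U}
      = Nat.card {T : invM W U // (Phi W U) T ∈ A} := Nat.card_congr (e₁.trans e₂)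
    _ = Nat.card A * Nat.card {T : invM W U // (Phi W U) T = 0} := hcard
    _ = (Nat.card ((U.comap W.subtype) →ₗ[F] U) *
          Nat.card {T' : (W.map U.mkQ) →ₗ[F] (V ⧸ U) // invSub (W.map U.mkQ) T' = ⊥}) *
        Nat.card ((W ⧸ U.comap W.subtype) →ₗ[F] U) := by
        rw [Nat.card_congr (e₃.trans (Equiv.prodCongr (Equiv.refl _) e₄)),
          Nat.card_prod, Nat.card_congr (kerPhiEquiv W U)]
    _ = _ := by ring

end CardR

section Grassmann

variable (F : Type*) [Field F]

/-- The number of subspaces of dimension `d`. -/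
noncomputable def Gc (X : Type*) [AddCommGroup X] [Module F X] (d : ℕ) : ℕ :=
  Nat.card {U : Submodule F X // finrank F U = d}

lemma Gc_congr {X Y : Type*} [AddCommGroup X] [Module F X] [AddCommGroup Y] [Module F Y]
    (e : X ≃ₗ[F] Y) (d : ℕ) : Gc F X d = Gc F Y d := by
  apply Nat.card_congr
  exact Equiv.subtypeEquiv (Submodule.orderIsoMapComap e).toEquiv (fun U => by
    have : finrank F (Submodule.map (e : X →ₗ[F] Y) U) = finrank F U :=
      LinearEquiv.finrank_map_eq e U
    constructor
    · intro h; rw [show ((Submodule.orderIsoMapComap e).toEquiv U) = Submodule.map (e : X →ₗ[F] Y) U from rfl, this]; exact h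
    · intro h
      rw [show ((Submodule.orderIsoMapComap e).toEquiv U) = Submodule.map (e : X →ₗ[F] Y) U from rfl, this] at h
      exact h)

lemma Gc_zero (X : Type*) [AddCommGroup X] [Module F X] [FiniteDimensional F X] :
    Gc F X 0 = 1 := by
  rw [Gc]
  have e : {U : Submodule F X // finrank F U = 0} ≃ PUnit.{1} :=
    { toFun := fun _ => PUnit.unit
      invFun := fun _ => ⟨⊥, finrank_bot F X⟩
      left_inv := fun U => Subtype.ext (by
        have := Submodule.finrank_eq_zero.mp U.2
        simp [this])
      right_inv := fun _ => rfl }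
  rw [Nat.card_congr e]
  simp

lemma Gc_of_lt (X : Type*) [AddCommGroup X] [Module F X] [FiniteDimensional F X] {d : ℕ}
    (h : finrank F X < d) : Gc F X d = 0 := by
  rw [Gc]
  have : IsEmpty {U : Submodule F X // finrank F U = d} := by
    constructor
    rintro ⟨U, hU⟩
    exact absurd (hU ▸ Submodule.finrank_le U) (not_le.2 h)
  exact Nat.card_of_isEmpty

variable {X : Type*} [AddCommGroup X] [Module F X] [FiniteDimensional F X]

lemma rank_drop (L p : Submodule F X) (hL1 : finrank F L = 1) (hLp : L ≤ p) :
    finrank F (p.map L.mkQ) + 1 = finrank F p := by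
  have h1 := LinearMap.finrank_range_add_finrank_ker (L.mkQ ∘ₗ p.subtype)
  have h2 : LinearMap.range (L.mkQ ∘ₗ p.subtype) = p.map L.mkQ := by
    rw [LinearMap.range_comp, Submodule.range_subtype]
  have h3 : LinearMap.ker (L.mkQ ∘ₗ p.subtype) = L.comap p.subtype := by
    rw [LinearMap.ker_comp, Submodule.ker_mkQ]
  have h4 : finrank F (L.comap p.subtype) = 1 := by
    rw [(Submodule.comapSubtypeEquivOfLe hLp).finrank_eq, hL1]
  rw [h2, h3, h4] at h1
  exact h1

lemma rank_keep (L p : Submodule F X) (hdisj : L ⊓ p = ⊥) :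
    finrank F (p.map L.mkQ) = finrank F p := by
  have h1 := LinearMap.finrank_range_add_finrank_ker (L.mkQ ∘ₗ p.subtype)
  have h2 : LinearMap.range (L.mkQ ∘ₗ p.subtype) = p.map L.mkQ := by
    rw [LinearMap.range_comp, Submodule.range_subtype]
  have h3 : LinearMap.ker (L.mkQ ∘ₗ p.subtype) = ⊥ := by
    rw [LinearMap.ker_comp, Submodule.ker_mkQ]
    ext x
    simp only [Submodule.mem_comap, Submodule.mem_bot]
    constructor
    · intro hx
      have : (x : X) ∈ L ⊓ p := ⟨hx, x.2⟩
      rw [hdisj] at this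
      exact Subtype.ext this
    · rintro rfl; simp
  rw [h2, h3] at h1
  simpa using h1

end Grassmann

section Pascal

variable (F : Type*) [Field F] [Fintype F]

lemma card_linearMap'' (A B : Type*) [AddCommGroup A] [Module F A]
    [FiniteDimensional F A] [AddCommGroup B] [Module F B] [FiniteDimensional F B] :
    Nat.card (A →ₗ[F] B) = Fintype.card F ^ (finrank F A * finrank F B) := by
  have : Finite (A →ₗ[F] B) := Module.finite_of_finite F
  letI : Fintype (A →ₗ[F] B) := Fintype.ofFinite _
  rw [Nat.card_eq_fintype_card, card_eq_pow_finrank (K := F), finrank_linearMap]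

/-- The number of complements of a line in a finite-dimensional space. -/
lemma card_compl_line (P : Type*) [AddCommGroup P] [Module F P] [FiniteDimensional F P]
    (L' : Submodule F P) (hL'1 : finrank F L' = 1) :
    Nat.card {U' : Submodule F P // IsCompl L' U'} =
      Fintype.card F ^ (finrank F P - 1) := by
  obtain ⟨c', hc'⟩ := Submodule.exists_isCompl L'
  set f₀ := L'.linearProjOfIsCompl c' hc' with hf₀
  have hf₀x : ∀ x : L', f₀ ↑x = x := fun x => Submodule.linearProjOfIsCompl_apply_left hc' x
  have eC : {f : P →ₗ[F] L' // ∀ x : L', f ↑x = x} ≃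
      {g : P →ₗ[F] L' // ∀ x : L', g ↑x = 0} :=
    { toFun := fun f => ⟨f.1 - f₀, fun x => by
        simp [LinearMap.sub_apply, f.2 x, hf₀x x]⟩
      invFun := fun g => ⟨g.1 + f₀, fun x => by
        simp [LinearMap.add_apply, g.2 x, hf₀x x]⟩
      left_inv := fun f => Subtype.ext (by simp)
      right_inv := fun g => Subtype.ext (by simp) }
  have eD : {g : P →ₗ[F] L' // ∀ x : L', g ↑x = 0} ≃ ((P ⧸ L') →ₗ[F] L') :=
    { toFun := fun g => L'.liftQ g.1 (by
        intro x hx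
        exact LinearMap.mem_ker.2 (g.2 ⟨x, hx⟩))
      invFun := fun h => ⟨h ∘ₗ L'.mkQ, fun x => by
        have : L'.mkQ ↑x = 0 := by
          rw [Submodule.mkQ_apply, Submodule.Quotient.mk_eq_zero]; exact x.2
        simp [this]⟩
      left_inv := fun g => Subtype.ext (by
        apply LinearMap.ext; intro x
        simp)
      right_inv := fun h => by
        apply Submodule.linearMap_qext; ext x; simp }
  rw [Nat.card_congr ((Submodule.isComplEquivProj L').trans (eC.trans eD)),
    card_linearMap'' F, hL'1, mul_one]
  congr 1
  have := Submodule.finrank_quotient_add_finrank L'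
  omega

end Pascal

section Pascal2

variable (F : Type*) [Field F] [Fintype F]
variable {X : Type*} [AddCommGroup X] [Module F X] [FiniteDimensional F X]

lemma line_disj (L U : Submodule F X) (hL1 : finrank F L = 1) (h : ¬ L ≤ U) :
    L ⊓ U = ⊥ := by
  by_contra hne
  have h1 : finrank F (L ⊓ U : Submodule F X) ≠ 0 := fun h0 =>
    hne (Submodule.finrank_eq_zero.1 h0)
  have h2 : finrank F L ≤ finrank F (L ⊓ U : Submodule F X) := by omega
  have := Submodule.eq_of_le_of_finrank_le inf_le_left h2
  exact h (inf_eq_left.1 this)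

lemma fiber_card (L : Submodule F X) (hL1 : finrank F L = 1) (d : ℕ)
    (Ub : Submodule F (X ⧸ L)) (hUb : finrank F Ub = d + 1) :
    Nat.card {U : Submodule F X // (finrank F U = d + 1 ∧ ¬ L ≤ U) ∧ U.map L.mkQ = Ub} =
      Fintype.card F ^ (d + 1) := by
  classical
  set P : Submodule F X := Ub.comap L.mkQ with hP
  have hLP : L ≤ P := by
    intro x hx
    have : L.mkQ x = 0 := by rw [Submodule.mkQ_apply, Submodule.Quotient.mk_eq_zero]; exact hx
    simp only [hP, Submodule.mem_comap, this]
    exact Submodule.zero_mem _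
  have hmapP : P.map L.mkQ = Ub := by
    rw [hP, Submodule.map_comap_eq, Submodule.range_mkQ, top_inf_eq]
  have hrkP : finrank F P = d + 2 := by
    have := rank_drop F L P hL1 hLP
    rw [hmapP, hUb] at this
    omega
  set L' : Submodule F P := L.comap P.subtype with hL'
  have hL'1 : finrank F L' = 1 := by
    rw [hL', (Submodule.comapSubtypeEquivOfLe hLP).finrank_eq, hL1]
  have e : {U : Submodule F X // (finrank F U = d + 1 ∧ ¬ L ≤ U) ∧ U.map L.mkQ = Ub} ≃
      {U' : Submodule F P // IsCompl L' U'} := by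
    refine { toFun := fun U => ⟨U.1.comap P.subtype, ?_⟩
             invFun := fun U' => ⟨(U'.1.map P.subtype), ?_, ?_⟩
             left_inv := ?_
             right_inv := ?_ }
    · -- IsCompl
      have hUP : U.1 ≤ P := by
        intro x hx
        have : L.mkQ x ∈ U.1.map L.mkQ := Submodule.mem_map_of_mem hx
        rw [U.2.2] at this
        exact this
      have hdisj : L ⊓ U.1 = ⊥ := line_disj F L U.1 hL1 U.2.1.2
      have hdisj' : L' ⊓ U.1.comap P.subtype = ⊥ := by
        ext x
        simp only [Submodule.mem_inf, Submodule.mem_comap, Submodule.mem_bot, hL']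
        constructor
        · rintro ⟨h1, h2⟩
          have : (x : X) ∈ L ⊓ U.1 := ⟨h1, h2⟩
          rw [hdisj] at this
          exact Subtype.ext this
        · rintro rfl; simp
      have hrkU' : finrank F (U.1.comap P.subtype) = d + 1 := by
        rw [(Submodule.comapSubtypeEquivOfLe hUP).finrank_eq, U.2.1.1]
      constructor
      · rw [disjoint_iff, hdisj']
      · rw [codisjoint_iff]
        apply Submodule.eq_top_of_finrank_eq
        have := Submodule.finrank_sup_add_finrank_inf_eq L' (U.1.comap P.subtype)
        rw [hdisj'] at this
        simp only [finrank_bot, add_zero] at this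
        omega
    · -- finrank of map ∧ ¬ L ≤ map
      have hrkU' : finrank F (U'.1 : Submodule F P) = d + 1 := by
        have := Submodule.finrank_add_eq_of_isCompl U'.2
        rw [hL'1, hrkP] at this
        omega
      have hdisjmap : L ⊓ U'.1.map P.subtype = ⊥ := by
        ext x
        simp only [Submodule.mem_inf, Submodule.mem_bot]
        constructor
        · rintro ⟨h1, h2⟩
          rcases h2 with ⟨y, hy, rfl⟩
          have hyL' : y ∈ L' := by simp only [hL', Submodule.mem_comap]; exact h1
          have : y ∈ L' ⊓ U'.1 := ⟨hyL', hy⟩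
          rw [U'.2.inf_eq_bot] at this
          have hy0 : y = 0 := (Submodule.mem_bot F).1 this
          simp [hy0]
        · rintro rfl
          exact ⟨Submodule.zero_mem _, Submodule.zero_mem _⟩
      refine ⟨?_, ?_⟩
      · rw [Submodule.finrank_map_subtype_eq, hrkU']
      · intro hle
        have : L ⊓ U'.1.map P.subtype = L := inf_eq_left.2 hle
        rw [hdisjmap] at this
        rw [← this] at hL1
        simp [finrank_bot] at hL1
    · -- map mkQ (map subtype U') = Ub
      have hrkU' : finrank F (U'.1 : Submodule F P) = d + 1 := by
        have := Submodule.finrank_add_eq_of_isCompl U'.2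
        rw [hL'1, hrkP] at this
        omega
      have hdisjmap : L ⊓ U'.1.map P.subtype = ⊥ := by
        ext x
        simp only [Submodule.mem_inf, Submodule.mem_bot]
        constructor
        · rintro ⟨h1, h2⟩
          rcases h2 with ⟨y, hy, rfl⟩
          have hyL' : y ∈ L' := by simp only [hL', Submodule.mem_comap]; exact h1
          have : y ∈ L' ⊓ U'.1 := ⟨hyL', hy⟩
          rw [U'.2.inf_eq_bot] at this
          have hy0 : y = 0 := (Submodule.mem_bot F).1 this
          simp [hy0]
        · rintro rfl
          exact ⟨Submodule.zero_mem _, Submodule.zero_mem _⟩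
      apply Submodule.eq_of_le_of_finrank_eq
      · refine le_trans (Submodule.map_mono (Submodule.map_subtype_le P U'.1)) ?_
        rw [hmapP]
      · rw [rank_keep F L _ hdisjmap, Submodule.finrank_map_subtype_eq, hrkU', hUb]
    · intro U
      apply Subtype.ext
      show Submodule.map P.subtype (Submodule.comap P.subtype U.1) = U.1
      rw [Submodule.map_comap_subtype]
      apply inf_eq_right.2
      intro x hx
      have : L.mkQ x ∈ U.1.map L.mkQ := Submodule.mem_map_of_mem hx
      rw [U.2.2] at this
      exact this
    · intro U'
      apply Subtype.ext
      show Submodule.comap P.subtype (Submodule.map P.subtype U'.1) = U'.1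
      rw [Submodule.comap_map_eq, Submodule.ker_subtype, sup_bot_eq]
  rw [Nat.card_congr e, card_compl_line F P L' hL'1, hrkP]
  congr 1

end Pascal2

section Pascal3

variable (F : Type*) [Field F] [Fintype F]
variable {X : Type*} [AddCommGroup X] [Module F X] [FiniteDimensional F X]

lemma Gc_pascal (v : X) (hv : v ≠ 0) (d : ℕ) :
    Gc F X (d + 1) = Gc F (X ⧸ (Submodule.span F {v})) d +
      Gc F (X ⧸ (Submodule.span F {v})) (d + 1) * Fintype.card F ^ (d + 1) := by
  classical
  set L := Submodule.span F {v} with hLdef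
  have hL1 : finrank F L = 1 := finrank_span_singleton hv
  have hfinX : Finite X := Module.finite_of_finite F
  have hfinSub : Finite (Submodule F X) :=
    Finite.of_injective (fun U => (U : Set X)) SetLike.coe_injective
  have hfinQ : Finite (X ⧸ L) := Module.finite_of_finite F
  have hfinSubQ : Finite (Submodule F (X ⧸ L)) :=
    Finite.of_injective (fun U => (U : Set (X ⧸ L))) SetLike.coe_injective
  have e0 : {U : Submodule F X // finrank F U = d + 1} ≃
      {U : Submodule F X // finrank F U = d + 1 ∧ L ≤ U} ⊕
      {U : Submodule F X // finrank F U = d + 1 ∧ ¬ L ≤ U} :=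
    ((Equiv.sumCompl (fun y : {U : Submodule F X // finrank F U = d + 1} => L ≤ y.1)).symm).trans
      (Equiv.sumCongr
        (Equiv.subtypeSubtypeEquivSubtypeInter
          (fun U : Submodule F X => finrank F U = d + 1) (fun U => L ≤ U))
        (Equiv.subtypeSubtypeEquivSubtypeInter
          (fun U : Submodule F X => finrank F U = d + 1) (fun U => ¬ L ≤ U)))
  have e1 : {U : Submodule F X // finrank F U = d + 1 ∧ L ≤ U} ≃
      {Ub : Submodule F (X ⧸ L) // finrank F Ub = d} :=
    { toFun := fun U => ⟨U.1.map L.mkQ, by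
        have := rank_drop F L U.1 hL1 U.2.2
        omega⟩
      invFun := fun Ub => by
        refine ⟨Ub.1.comap L.mkQ, ?_, ?_⟩
        · have hLle : L ≤ Ub.1.comap L.mkQ := by
            intro x hx
            have hx0 : L.mkQ x = 0 := by
              rw [Submodule.mkQ_apply, Submodule.Quotient.mk_eq_zero]; exact hx
            simp only [Submodule.mem_comap, hx0]
            exact Submodule.zero_mem _
          have hmapeq : (Ub.1.comap L.mkQ).map L.mkQ = Ub.1 := by
            rw [Submodule.map_comap_eq, Submodule.range_mkQ, top_inf_eq]
          have := rank_drop F L (Ub.1.comap L.mkQ) hL1 hLle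
          rw [hmapeq] at this
          omega
        · intro x hx
          have hx0 : L.mkQ x = 0 := by
            rw [Submodule.mkQ_apply, Submodule.Quotient.mk_eq_zero]; exact hx
          simp only [Submodule.mem_comap, hx0]
          exact Submodule.zero_mem _
      left_inv := fun U => Subtype.ext (by
        show (U.1.map L.mkQ).comap L.mkQ = U.1
        rw [Submodule.comap_map_eq, Submodule.ker_mkQ]
        exact sup_eq_left.2 U.2.2)
      right_inv := fun Ub => Subtype.ext (by
        show (Ub.1.comap L.mkQ).map L.mkQ = Ub.1
        rw [Submodule.map_comap_eq, Submodule.range_mkQ, top_inf_eq]) }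
  have hmain : Nat.card {U : Submodule F X // finrank F U = d + 1 ∧ ¬ L ≤ U} =
      Gc F (X ⧸ L) (d + 1) * Fintype.card F ^ (d + 1) := by
    letI : Fintype {Ub : Submodule F (X ⧸ L) // finrank F Ub = d + 1} := Fintype.ofFinite _
    letI : Fintype {U : Submodule F X // finrank F U = d + 1 ∧ ¬ L ≤ U} := Fintype.ofFinite _
    set g : {U : Submodule F X // finrank F U = d + 1 ∧ ¬ L ≤ U} →
        {Ub : Submodule F (X ⧸ L) // finrank F Ub = d + 1} :=
      fun U => ⟨U.1.map L.mkQ, by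
        rw [rank_keep F L U.1 (line_disj F L U.1 hL1 U.2.2)]; exact U.2.1⟩ with hg
    rw [Nat.card_congr (Equiv.sigmaFiberEquiv g).symm, Nat.card_eq_fintype_card,
      Fintype.card_sigma]
    have hfib : ∀ Ub, Fintype.card {y // g y = Ub} = Fintype.card F ^ (d + 1) := by
      intro Ub
      have efib : {y // g y = Ub} ≃
          {U : Submodule F X // (finrank F U = d + 1 ∧ ¬ L ≤ U) ∧ U.map L.mkQ = Ub.1} :=
        { toFun := fun y => ⟨y.1.1, ⟨y.1.2, congrArg Subtype.val y.2⟩⟩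
          invFun := fun U => ⟨⟨U.1, U.2.1⟩, Subtype.ext U.2.2⟩
          left_inv := fun y => rfl
          right_inv := fun U => rfl }
      rw [← Nat.card_eq_fintype_card, Nat.card_congr efib, fiber_card F L hL1 d Ub.1 Ub.2]
    rw [Finset.sum_congr rfl (fun Ub _ => hfib Ub), Finset.sum_const, smul_eq_mul,
      Finset.card_univ, ← Nat.card_eq_fintype_card]
    rfl
  show Nat.card {U : Submodule F X // finrank F U = d + 1} = _
  rw [Nat.card_congr e0, Nat.card_sum, Nat.card_congr e1, hmain]
  rfl

end Pascal3

section Identity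

lemma prod_Icc_peel_bot {M : Type*} [CommMonoid M] (f : ℕ → M) (a b : ℕ) (h : a ≤ b) :
    ∏ i ∈ Finset.Icc a b, f i = f a * ∏ i ∈ Finset.Icc (a + 1) b, f i := by
  rw [← Finset.Ico_add_one_right_eq_Icc, Finset.prod_eq_prod_Ico_succ_bot (show a < b + 1 by omega),
    Finset.Ico_add_one_right_eq_Icc]

lemma prod_shift_one (c : ℤ) (n a b : ℕ) (hn : 1 ≤ n) :
    ∏ i ∈ Finset.Icc (a + 1) (b + 1), (c ^ n - c ^ i) =
      c ^ (Finset.Icc (a + 1) (b + 1)).card *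
        ∏ i ∈ Finset.Icc a b, (c ^ (n - 1) - c ^ i) := by
  have himg : Finset.Icc (a + 1) (b + 1) = Finset.image (fun x => x + 1) (Finset.Icc a b) := by
    rw [Finset.image_add_right_Icc]
  rw [himg, Finset.prod_image (by intro x _ y _ h; simp only at h; omega)]
  have hcard : (Finset.image (fun x => x + 1) (Finset.Icc a b)).card = (Finset.Icc a b).card := by
    rw [← himg, Nat.card_Icc, Nat.card_Icc]
    omega
  rw [hcard]
  have hfac : ∀ i, c ^ n - c ^ (i + 1) = c * (c ^ (n - 1) - c ^ i) := by
    intro i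
    have hn' : c ^ n = c * c ^ (n - 1) := by
      conv_lhs => rw [show n = (n - 1) + 1 by omega]
      rw [pow_succ]; ring
    rw [mul_sub, ← hn', pow_succ]; ring
  calc ∏ i ∈ Finset.Icc a b, (c ^ n - c ^ (i + 1))
      = ∏ i ∈ Finset.Icc a b, (c * (c ^ (n - 1) - c ^ i)) := by
        exact Finset.prod_congr rfl (fun i _ => hfac i)
    _ = c ^ (Finset.Icc a b).card * ∏ i ∈ Finset.Icc a b, (c ^ (n - 1) - c ^ i) := by
        rw [Finset.prod_mul_distrib, Finset.prod_const]

lemma prod_shift (c : ℤ) (d : ℕ) : ∀ n' k' : ℕ,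
    ∏ i ∈ Finset.Icc (d + 1) (k' + d), (c ^ (n' + d) - c ^ i) =
      c ^ (d * k') * ∏ i ∈ Finset.Icc 1 k', (c ^ n' - c ^ i) := by
  induction d with
  | zero => intro n' k'; simp
  | succ d IH =>
    intro n' k'
    have h1 : k' + (d + 1) = (k' + d) + 1 := by omega
    have h2 : (d + 1) + 1 = (d + 1) + 1 := rfl
    rw [h1, prod_shift_one c (n' + (d + 1)) (d + 1) (k' + d) (by omega)]
    have h3 : n' + (d + 1) - 1 = n' + d := by omega
    have h4 : (Finset.Icc (d + 1 + 1) (k' + d + 1)).card + d * k' = (d + 1) * k' := by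
      rw [Nat.card_Icc]; ring_nf; omega
    rw [h3, IH n' k', ← mul_assoc, ← pow_add, h4]

end Identity

section GqDef

variable (F : Type*) [Field F] [Fintype F]

noncomputable def gq (k d : ℕ) : ℕ := Gc F (Fin k → F) d

lemma gq_zero (k : ℕ) : gq F k 0 = 1 := Gc_zero F _

lemma gq_of_lt {k d : ℕ} (h : k < d) : gq F k d = 0 := by
  apply Gc_of_lt
  rw [Module.finrank_fintype_fun_eq_card, Fintype.card_fin]
  exact h

lemma Gc_eq_gq (X : Type*) [AddCommGroup X] [Module F X] [FiniteDimensional F X] (d : ℕ) :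
    Gc F X d = gq F (finrank F X) d := by
  apply Gc_congr
  apply LinearEquiv.ofFinrankEq
  rw [Module.finrank_fintype_fun_eq_card, Fintype.card_fin]

lemma gq_pascal (k d : ℕ) :
    gq F (k + 1) (d + 1) = gq F k d + gq F k (d + 1) * Fintype.card F ^ (d + 1) := by
  have hv : ((fun _ => (1 : F)) : Fin (k + 1) → F) ≠ 0 := by
    intro h
    exact one_ne_zero (congrFun h 0)
  have h := Gc_pascal F ((fun _ => (1 : F)) : Fin (k + 1) → F) hv d
  set L := Submodule.span F {((fun _ => (1 : F)) : Fin (k + 1) → F)}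
  have hrk : finrank F ((Fin (k + 1) → F) ⧸ L) = k := by
    have h2 := Submodule.finrank_quotient_add_finrank L
    have h3 : finrank F L = 1 := finrank_span_singleton hv
    have h4 : finrank F (Fin (k + 1) → F) = k + 1 := by
      rw [Module.finrank_fintype_fun_eq_card, Fintype.card_fin]
    omega
  rw [gq, h, Gc_eq_gq F _ d, Gc_eq_gq F _ (d + 1), hrk]

lemma sum_identity_s7 : ∀ k n : ℕ, k ≤ n →
    ∑ d ∈ Finset.range (k + 1), (gq F k d : ℤ) * (Fintype.card F : ℤ) ^ (d * d) *
        ∏ i ∈ Finset.Icc (d + 1) k, ((Fintype.card F : ℤ) ^ n - (Fintype.card F : ℤ) ^ i)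
      = (Fintype.card F : ℤ) ^ (n * k) := by
  intro k
  induction k with
  | zero => intro n _; simp [gq_zero]
  | succ k IH =>
    intro n hn
    set c : ℤ := (Fintype.card F : ℤ) with hc
    have hn1 : 1 ≤ n := le_trans (by omega) hn
    set P : ℕ → ℤ := fun d => ∏ i ∈ Finset.Icc (d + 1) (k + 1), (c ^ n - c ^ i) with hP
    have hterm0 : (gq F (k + 1) 0 : ℤ) * c ^ (0 * 0) * P 0 = P 0 := by
      rw [gq_zero]; push_cast; ring
    rw [Finset.sum_range_succ']
    have hsplit : ∀ d ∈ Finset.range (k + 1),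
        (gq F (k + 1) (d + 1) : ℤ) * c ^ ((d + 1) * (d + 1)) * P (d + 1) =
          (gq F k d : ℤ) * c ^ ((d + 1) * (d + 1)) * P (d + 1) +
          (gq F k (d + 1) : ℤ) * c ^ ((d + 1) + (d + 1) * (d + 1)) * P (d + 1) := by
      intro d _
      rw [gq_pascal]
      push_cast
      rw [pow_add]
      ring
    rw [Finset.sum_congr rfl hsplit, Finset.sum_add_distrib, hterm0]
    have hB : (∑ d ∈ Finset.range (k + 1),
          (gq F k (d + 1) : ℤ) * c ^ ((d + 1) + (d + 1) * (d + 1)) * P (d + 1)) + P 0 =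
        ∑ d ∈ Finset.range (k + 1), (gq F k d : ℤ) * c ^ (d + d * d) * P d := by
      have h0 : (gq F k 0 : ℤ) * c ^ (0 + 0 * 0) * P 0 = P 0 := by
        rw [gq_zero]; push_cast; ring
      have htop : (gq F k (k + 1) : ℤ) * c ^ ((k + 1) + (k + 1) * (k + 1)) * P (k + 1) = 0 := by
        rw [gq_of_lt F (by omega)]; push_cast; ring
      calc (∑ d ∈ Finset.range (k + 1),
            (gq F k (d + 1) : ℤ) * c ^ ((d + 1) + (d + 1) * (d + 1)) * P (d + 1)) + P 0
          = ∑ d ∈ Finset.range (k + 2), (gq F k d : ℤ) * c ^ (d + d * d) * P d := by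
            rw [Finset.sum_range_succ'
              (fun d => (gq F k d : ℤ) * c ^ (d + d * d) * P d) (k + 1)]
            rw [h0]
        _ = (∑ d ∈ Finset.range (k + 1), (gq F k d : ℤ) * c ^ (d + d * d) * P d) +
              (gq F k (k + 1) : ℤ) * c ^ ((k + 1) + (k + 1) * (k + 1)) * P (k + 1) := by
            rw [Finset.sum_range_succ]
        _ = ∑ d ∈ Finset.range (k + 1), (gq F k d : ℤ) * c ^ (d + d * d) * P d := by
            rw [htop, add_zero]
    rw [add_assoc, hB, ← Finset.sum_add_distrib]
    have hpw : ∀ d ∈ Finset.range (k + 1),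
        (gq F k d : ℤ) * c ^ ((d + 1) * (d + 1)) * P (d + 1) +
          (gq F k d : ℤ) * c ^ (d + d * d) * P d =
        c ^ (n + k) * ((gq F k d : ℤ) * c ^ (d * d) *
          ∏ i ∈ Finset.Icc (d + 1) k, (c ^ (n - 1) - c ^ i)) := by
      intro d hd
      have hdk : d ≤ k := by
        simp only [Finset.mem_range] at hd; omega
      have hPd : P d = (c ^ n - c ^ (d + 1)) * P (d + 1) := by
        rw [hP]
        exact prod_Icc_peel_bot (fun i => c ^ n - c ^ i) (d + 1) (k + 1) (by omega)
      have hPd1 : P (d + 1) = c ^ (k - d) *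
          ∏ i ∈ Finset.Icc (d + 1) k, (c ^ (n - 1) - c ^ i) := by
        show (∏ i ∈ Finset.Icc (d + 1 + 1) (k + 1), (c ^ n - c ^ i)) = _
        have h5 := prod_shift_one c n (d + 1) k hn1
        rw [h5, Nat.card_Icc]
        congr 2
        omega
      have e1 : c ^ ((d + 1) * (d + 1)) = c ^ (d * d) * c ^ d * c ^ d * c := by
        rw [show (d + 1) * (d + 1) = d * d + d + d + 1 by ring, pow_add, pow_add, pow_add,
          pow_one]
      have e2 : c ^ (d + d * d) = c ^ d * c ^ (d * d) := by rw [pow_add]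
      have e3 : c ^ (n + k) = c ^ n * c ^ d * c ^ (k - d) := by
        rw [← pow_add, ← pow_add]
        congr 1
        omega
      have e4 : c ^ (d + 1) = c ^ d * c := by rw [pow_succ]
      rw [hPd, hPd1, e1, e2, e3, e4]
      ring
    rw [Finset.sum_congr rfl hpw, ← Finset.mul_sum, IH (n - 1) (by omega)]
    have hexp : (n + k) + (n - 1) * k = n * (k + 1) := by
      obtain ⟨m, rfl⟩ : ∃ m, n = m + 1 := ⟨n - 1, by omega⟩
      simp only [Nat.add_sub_cancel]
      ring
    rw [← pow_add, hexp]

end GqDef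

section Zlemma

universe u v

lemma Zcard (F : Type u) [Field F] [Fintype F] (k : ℕ) :
    ∀ (V : Type v) [AddCommGroup V] [Module F V] [FiniteDimensional F V]
      (W : Submodule F V), finrank F W = k →
      (Nat.card {T : W →ₗ[F] V // invSub W T = ⊥} : ℤ) =
        ∏ i ∈ Finset.Icc 1 k,
          ((Fintype.card F : ℤ) ^ (finrank F V) - (Fintype.card F : ℤ) ^ i) := by
  induction k using Nat.strong_induction_on with
  | _ k IH =>
  intro V _ _ _ W hk
  classical
  set c : ℤ := (Fintype.card F : ℤ) with hc
  set n : ℕ := finrank F V with hn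
  have hkn : k ≤ n := hk ▸ Submodule.finrank_le W
  -- Step 1: value of the fibers over nonzero U
  have hval : ∀ U : Submodule F V, U ≤ W → U ≠ ⊥ →
      (Nat.card {T : W →ₗ[F] V // invSub W T = U} : ℤ) =
        c ^ (finrank F U * finrank F U) *
          ∏ i ∈ Finset.Icc (finrank F U + 1) k, (c ^ n - c ^ i) := by
    intro U hUW hUne
    set d : ℕ := finrank F U with hd
    have hd1 : 1 ≤ d := by
      rcases Nat.eq_zero_or_pos d with h0 | h
      · exact absurd (Submodule.finrank_eq_zero.1 h0) hUne
      · exact h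
    have hdk : d ≤ k := hk ▸ Submodule.finrank_mono hUW
    have hdn : d ≤ n := hn ▸ Submodule.finrank_le U
    have hU₀ : finrank F (U.comap W.subtype) = d :=
      (Submodule.comapSubtypeEquivOfLe hUW).finrank_eq
    have hQW : finrank F (W ⧸ U.comap W.subtype) = k - d := by
      have h1 := Submodule.finrank_quotient_add_finrank (U.comap W.subtype)
      omega
    have hW' : finrank F (W.map U.mkQ) = k - d := by
      rw [← (eWQ W U).finrank_eq]
      exact hQW
    have hVQ : finrank F (V ⧸ U) = n - d := by
      have h1 := Submodule.finrank_quotient_add_finrank U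
      omega
    have hIH := IH (k - d) (by omega) (V ⧸ U) (W.map U.mkQ) hW'
    rw [hVQ] at hIH
    rw [cardR W U hUW]
    push_cast
    rw [card_linearMap' F, card_linearMap' F, hU₀, hQW, hIH]
    push_cast
    have hps := prod_shift c d (n - d) (k - d)
    rw [show (k - d) + d = k by omega, show (n - d) + d = n by omega] at hps
    rw [hps, Nat.mul_comm (k - d) d]
    push_cast
    ring
  -- Finiteness
  have hfinV : Finite V := Module.finite_of_finite F
  have hfinSub : Finite (Submodule F V) :=
    Finite.of_injective (fun U => (U : Set V)) SetLike.coe_injective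
  have hfinSubW : Finite (Submodule F W) :=
    Finite.of_injective (fun U => (U : Set W)) SetLike.coe_injective
  have hfinHom : Finite (W →ₗ[F] V) := Module.finite_of_finite F
  letI : Fintype (Submodule F V) := Fintype.ofFinite _
  letI : Fintype (Submodule F W) := Fintype.ofFinite _
  letI : Fintype (W →ₗ[F] V) := Fintype.ofFinite _
  -- Step 2: partition of all maps by their invSub
  have hpart : (Fintype.card F : ℕ) ^ (finrank F W * finrank F V) =
      ∑ U : Submodule F V, Nat.card {T : W →ₗ[F] V // invSub W T = U} := by
    rw [← card_linearMap' F]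
    rw [Nat.card_congr (Equiv.sigmaFiberEquiv (fun T : W →ₗ[F] V => invSub W T)).symm]
    rw [Nat.card_eq_fintype_card, Fintype.card_sigma]
    apply Finset.sum_congr rfl
    intro U _
    rw [Nat.card_eq_fintype_card]
  -- Step 3: terms with U not contained in W vanish
  have hzero : ∀ U : Submodule F V, ¬ U ≤ W →
      Nat.card {T : W →ₗ[F] V // invSub W T = U} = 0 := by
    intro U hU
    have : IsEmpty {T : W →ₗ[F] V // invSub W T = U} := by
      constructor
      rintro ⟨T, hT⟩
      exact hU (hT ▸ (invSub_isInv W T).1)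
    exact Nat.card_of_isEmpty
  -- Step 4: restrict the sum to submodules of W
  have hsum2 : (∑ U : Submodule F V, (Nat.card {T : W →ₗ[F] V // invSub W T = U} : ℤ)) =
      ∑ U' : Submodule F W,
        (Nat.card {T : W →ₗ[F] V // invSub W T = U'.map W.subtype} : ℤ) := by
    rw [← Finset.sum_filter_of_ne (p := fun U => U ≤ W)
      (fun U _ hne => by
        by_contra hUW
        exact hne (by rw [hzero U hUW]; norm_num))]
    apply Finset.sum_nbij' (fun U => U.comap W.subtype) (fun U' => U'.map W.subtype)
    · intro U hU
      exact Finset.mem_univ _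
    · intro U' _
      simp only [Finset.mem_filter, Finset.mem_univ, true_and]
      exact Submodule.map_subtype_le W U'
    · intro U hU
      simp only [Finset.mem_filter, Finset.mem_univ, true_and] at hU
      rw [Submodule.map_comap_subtype]
      exact inf_eq_right.2 hU
    · intro U' _
      rw [Submodule.comap_map_eq, Submodule.ker_subtype, sup_bot_eq]
    · intro U hU
      simp only [Finset.mem_filter, Finset.mem_univ, true_and] at hU
      rw [Submodule.map_comap_subtype, inf_eq_right.2 hU]
  -- Step 5: the full formula sum equals the total count
  have hfull : (∑ U' : Submodule F W,
      (c ^ (finrank F U' * finrank F U') *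
        ∏ i ∈ Finset.Icc (finrank F U' + 1) k, (c ^ n - c ^ i))) = c ^ (n * k) := by
    rw [← sum_identity_s7 F k n hkn]
    rw [← Finset.sum_fiberwise_of_maps_to (g := fun U' : Submodule F W => finrank F U')
      (t := Finset.range (k + 1)) (fun U' _ => Finset.mem_range.2 (by
        show finrank F U' < k + 1
        have h1 := Submodule.finrank_le U'
        omega))]
    apply Finset.sum_congr rfl
    intro d _
    rw [Finset.sum_congr rfl (fun U' hU' => by
      simp only [Finset.mem_filter] at hU'
      rw [hU'.2])]
    rw [Finset.sum_const, ← Fintype.card_subtype]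
    have : Fintype.card {U' : Submodule F W // finrank F U' = d} = gq F k d := by
      rw [← Nat.card_eq_fintype_card]
      show Gc F W d = _
      rw [Gc_eq_gq, hk]
    rw [this]
    push_cast
    ring
  -- Step 6: split off the ⊥ term in both sums and conclude
  have hbotW : finrank F ((⊥ : Submodule F W)) = 0 := finrank_bot F W
  have hmapbot : (⊥ : Submodule F W).map W.subtype = ⊥ := Submodule.map_bot W.subtype
  have hsplit1 : (∑ U' : Submodule F W,
      (Nat.card {T : W →ₗ[F] V // invSub W T = U'.map W.subtype} : ℤ)) =
      (Nat.card {T : W →ₗ[F] V // invSub W T = ⊥} : ℤ) +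
      ∑ U' ∈ Finset.univ.erase (⊥ : Submodule F W),
        (Nat.card {T : W →ₗ[F] V // invSub W T = U'.map W.subtype} : ℤ) := by
    rw [← Finset.add_sum_erase _ _ (Finset.mem_univ (⊥ : Submodule F W)), hmapbot]
  have hsplit2 : (∑ U' : Submodule F W,
      (c ^ (finrank F U' * finrank F U') *
        ∏ i ∈ Finset.Icc (finrank F U' + 1) k, (c ^ n - c ^ i))) =
      (∏ i ∈ Finset.Icc 1 k, (c ^ n - c ^ i)) +
      ∑ U' ∈ Finset.univ.erase (⊥ : Submodule F W),
        (c ^ (finrank F U' * finrank F U') *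
          ∏ i ∈ Finset.Icc (finrank F U' + 1) k, (c ^ n - c ^ i)) := by
    rw [← Finset.add_sum_erase _ _ (Finset.mem_univ (⊥ : Submodule F W)), hbotW]
    norm_num
  have hagree : ∀ U' ∈ Finset.univ.erase (⊥ : Submodule F W),
      (Nat.card {T : W →ₗ[F] V // invSub W T = U'.map W.subtype} : ℤ) =
        c ^ (finrank F U' * finrank F U') *
          ∏ i ∈ Finset.Icc (finrank F U' + 1) k, (c ^ n - c ^ i) := by
    intro U' hU'
    have hne : U' ≠ ⊥ := Finset.ne_of_mem_erase hU'
    have hmapne : U'.map W.subtype ≠ ⊥ := by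
      intro h
      apply hne
      have h2 := congrArg (Submodule.comap W.subtype) h
      rwa [Submodule.comap_map_eq, Submodule.ker_subtype, sup_bot_eq, Submodule.comap_bot,
        Submodule.ker_subtype] at h2
    have := hval (U'.map W.subtype) (Submodule.map_subtype_le W U') hmapne
    rw [this, Submodule.finrank_map_subtype_eq]
  -- combine
  have hIZ : (c ^ (n * k)) =
      (Nat.card {T : W →ₗ[F] V // invSub W T = ⊥} : ℤ) +
      ∑ U' ∈ Finset.univ.erase (⊥ : Submodule F W),
        (c ^ (finrank F U' * finrank F U') *
          ∏ i ∈ Finset.Icc (finrank F U' + 1) k, (c ^ n - c ^ i)) := by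
    have h1 : ((Fintype.card F : ℕ) ^ (finrank F W * finrank F V) : ℤ) = c ^ (n * k) := by
      push_cast
      rw [hk, hn]
      rw [Nat.mul_comm]
    rw [← h1]
    rw [show ((Fintype.card F : ℤ)) ^ (finrank F W * finrank F V) =
      ((Fintype.card F ^ (finrank F W * finrank F V) : ℕ) : ℤ) by push_cast; ring]
    rw [hpart]
    push_cast
    rw [hsum2, hsplit1, Finset.sum_congr rfl hagree]
  rw [hsplit2] at hfull
  linarith [hfull, hIZ]

end Zlemma

theorem stmt7 (F V : Type*) [Field F] [Fintype F] [AddCommGroup V] [Module F V]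
    [FiniteDimensional F V] (q n k d : ℕ) (hq : Fintype.card F = q)
    (hn : finrank F V = n) (W : Submodule F V) (hk : finrank F W = k) (hkn : k ≤ n)
    (U : Submodule F V) (hUW : U ≤ W) (hd : finrank F U = d) :
    (Nat.card {T : W →ₗ[F] V // invSub W T = U} : ℤ) =
      (q : ℤ) ^ (d ^ 2) * ∏ i ∈ Icc (d + 1) k, ((q : ℤ) ^ n - (q : ℤ) ^ i) := by
  have hdk : d ≤ k := by
    rw [← hk, ← hd]; exact Submodule.finrank_mono hUW
  have hdn : d ≤ n := by
    rw [← hn, ← hd]; exact Submodule.finrank_le U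
  have hU₀ : finrank F (U.comap W.subtype) = d := by
    rw [(Submodule.comapSubtypeEquivOfLe hUW).finrank_eq, hd]
  have hQW : finrank F (W ⧸ U.comap W.subtype) = k - d := by
    have h1 := Submodule.finrank_quotient_add_finrank (U.comap W.subtype)
    omega
  have hW' : finrank F (W.map U.mkQ) = k - d := by
    rw [← (eWQ W U).finrank_eq]
    exact hQW
  have hVQ : finrank F (V ⧸ U) = n - d := by
    have h1 := Submodule.finrank_quotient_add_finrank U
    omega
  have hZ := Zcard F (k - d) (V ⧸ U) (W.map U.mkQ) hW'
  rw [hVQ] at hZ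
  rw [cardR W U hUW]
  push_cast
  rw [card_linearMap' F, card_linearMap' F, hU₀, hQW, hd, hZ, hq]
  push_cast
  have hps := prod_shift (q : ℤ) d (n - d) (k - d)
  rw [show (k - d) + d = k by omega, show (n - d) + d = n by omega] at hps
  rw [hps, show d ^ 2 = d * d by ring, Nat.mul_comm (k - d) d]
  ring
end
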